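/- arXiv:2604.04813 — 2 statements merged into one kernel-verified Lean document; each statement's English description precedes it below -/
import Mathlib

section
/- Let H be a left Hopf R-algebroid with invertible antipode S, F an invertible counital 2-cocycle with V_F invertible, and S_F(h) = V_F⁻¹(Sh)V_F with inverse S_F⁻¹(h) = (S⁻¹V_F⁻¹)(S⁻¹h)(S⁻¹V_F). Then (S_F⁻¹h_(2F))_(1F) ⊗_{R_F} (S_F⁻¹h_(2F))_(2F)h_(1F) = S_F⁻¹h ⊗_{R_F} 1_H for all h ∈ H. -/
open TensorProduct

noncomputable section Bialgebroid

variable (k R H : Type*) [CommRing k] [Ring R] [Ring H] [Algebra k R] [Algebra k H]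

/-- Data of a left `R`-bialgebroid over `k`, with a chosen `k`-linear lift
`Δ : H → H ⊗ₖ H` of the comultiplication `H → H ⊗_R H`. -/
structure BgdCore where
  /-- the source map -/
  α : R →ₐ[k] H
  /-- the target map (an algebra antihomomorphism) -/
  β : R →ₗ[k] H
  β_one : β 1 = 1
  β_mul : ∀ r s : R, β (r * s) = β s * β r
  αβ_comm : ∀ r s : R, α r * β s = β s * α r
  /-- lift of the comultiplication -/
  Δ : H →ₗ[k] H ⊗[k] H
  /-- the counit -/
  ε : H →ₗ[k] R

variable {k R H}

namespace BgdCore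

/-- kernel of `H ⊗ₖ H ⊗ₖ H → H ⊗ H ⊗ H` over the base, for general
source/target maps `a`, `b`. -/
def iR3g (a b : R → H) : Submodule k ((H ⊗[k] H) ⊗[k] H) :=
  Submodule.span k
    ({x | ∃ (r : R) (g g' g'' : H),
        x = ((b r * g) ⊗ₜ[k] g') ⊗ₜ[k] g'' - (g ⊗ₜ[k] (a r * g')) ⊗ₜ[k] g''} ∪
     {x | ∃ (r : R) (g g' g'' : H),
        x = (g ⊗ₜ[k] (b r * g')) ⊗ₜ[k] g'' - (g ⊗ₜ[k] g') ⊗ₜ[k] (a r * g'')})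

variable (D : BgdCore k R H)

/-- `I_R`, the kernel of the projection `H ⊗ₖ H → H ⊗_R H`. -/
def iR : Submodule k (H ⊗[k] H) :=
  Submodule.span k
    {x | ∃ (r : R) (g g' : H), x = (D.β r * g) ⊗ₜ[k] g' - g ⊗ₜ[k] (D.α r * g')}

/-- kernel of `H ⊗ₖ H ⊗ₖ H → H ⊗_R H ⊗_R H`. -/
def iR3 : Submodule k ((H ⊗[k] H) ⊗[k] H) :=
  iR3g (fun r => D.α r) (fun r => D.β r)

/-- `x ⊗ y ↦ α(ε x) * y`, realizing the left counit constraint. -/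
def counitL : H ⊗[k] H →ₗ[k] H :=
  LinearMap.mul' k H ∘ₗ TensorProduct.map (D.α.toLinearMap ∘ₗ D.ε) LinearMap.id

/-- `x ⊗ y ↦ β(ε y) * x`, realizing the right counit constraint. -/
def counitR : H ⊗[k] H →ₗ[k] H :=
  LinearMap.mul' k H ∘ₗ TensorProduct.map (D.β ∘ₗ D.ε) LinearMap.id
    ∘ₗ (TensorProduct.comm k H H).toLinearMap

end BgdCore

variable (k R H) in
/-- A left `R`-bialgebroid; identities involving `H ⊗_R H` are stated for the
chosen lifts modulo the ideal `I_R`. -/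
structure LeftBialgebroid extends BgdCore k R H where
  εα : ∀ r : R, ε (α r) = r
  εβ : ∀ r : R, ε (β r) = r
  ε_lmul : ∀ (r : R) (h : H), ε (α r * h) = r * ε h
  ε_rmul : ∀ (r : R) (h : H), ε (β r * h) = ε h * r
  ε_weakmul : ∀ g h : H, ε (g * h) = ε (g * α (ε h))
  counit_left : ∀ h : H, toBgdCore.counitL (Δ h) = h
  counit_right : ∀ h : H, toBgdCore.counitR (Δ h) = h
  Δ_one : Δ 1 - 1 ∈ toBgdCore.iR
  Δ_mul : ∀ g h : H, Δ (g * h) - Δ g * Δ h ∈ toBgdCore.iR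
  Δ_bimod : ∀ (a b : R) (h : H),
    Δ (α a * (β b * h)) - (α a ⊗ₜ[k] β b) * Δ h ∈ toBgdCore.iR
  Δ_ideal : ∀ h : H, ∀ x ∈ toBgdCore.iR, Δ h * x ∈ toBgdCore.iR
  coassoc : ∀ h : H,
    (TensorProduct.map Δ LinearMap.id) (Δ h)
      - (TensorProduct.assoc k H H H).symm ((TensorProduct.map LinearMap.id Δ) (Δ h))
      ∈ toBgdCore.iR3

/-- `x ⊗ y ↦ (Dl(T x) * C) * (y ⊗ 1)`; Sweedler: `(Tx)₍₁₎C¹y ⊗ (Tx)₍₂₎C²`. -/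
def sandL (Dl : H →ₗ[k] H ⊗[k] H) (T : H →ₗ[k] H) (C : H ⊗[k] H) :
    H ⊗[k] H →ₗ[k] H ⊗[k] H :=
  LinearMap.mul' k (H ⊗[k] H) ∘ₗ
    TensorProduct.map (LinearMap.mulRight k C ∘ₗ Dl ∘ₗ T) ((TensorProduct.mk k H H).flip 1)

/-- `x ⊗ y ↦ (Dl(T y) * C) * (1 ⊗ x)`. -/
def sandR (Dl : H →ₗ[k] H ⊗[k] H) (T : H →ₗ[k] H) (C : H ⊗[k] H) :
    H ⊗[k] H →ₗ[k] H ⊗[k] H :=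
  LinearMap.mul' k (H ⊗[k] H) ∘ₗ
    TensorProduct.map (LinearMap.mulRight k C ∘ₗ Dl ∘ₗ T) (TensorProduct.mk k H H 1)
    ∘ₗ (TensorProduct.comm k H H).toLinearMap

/-- `(x ⊗ y) ⊗ z ↦ Dl(T x) * (y ⊗ z)`, lift of the map `δ_S`. -/
def trimapL (Dl : H →ₗ[k] H ⊗[k] H) (T : H →ₗ[k] H) :
    (H ⊗[k] H) ⊗[k] H →ₗ[k] H ⊗[k] H :=
  LinearMap.mul' k (H ⊗[k] H) ∘ₗ TensorProduct.map (Dl ∘ₗ T) LinearMap.id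
    ∘ₗ (TensorProduct.assoc k H H H).toLinearMap

/-- `(x ⊗ y) ⊗ z ↦ Dl(T z) * (x ⊗ y)`, lift of the map `δ_{S⁻¹}`. -/
def trimapR (Dl : H →ₗ[k] H ⊗[k] H) (T : H →ₗ[k] H) :
    (H ⊗[k] H) ⊗[k] H →ₗ[k] H ⊗[k] H :=
  LinearMap.mul' k (H ⊗[k] H) ∘ₗ TensorProduct.map (Dl ∘ₗ T) LinearMap.id
    ∘ₗ (TensorProduct.comm k (H ⊗[k] H) H).toLinearMap

/-- `V`-element: for `F = F¹ ⊗ F²` this is `(T F¹) F²`. -/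
def Vof (T : H →ₗ[k] H) (F : H ⊗[k] H) : H :=
  LinearMap.mul' k H ((TensorProduct.map T LinearMap.id) F)

/-- conjugated map `h ↦ a * (T h) * b`. -/
def SFmap (T : H →ₗ[k] H) (a b : H) : H →ₗ[k] H :=
  LinearMap.mulLeft k a ∘ₗ LinearMap.mulRight k b ∘ₗ T

/-- A Böhm–Szlachányi invertible antipode for a left bialgebroid. -/
structure BSAntipode (B : LeftBialgebroid k R H) where
  /-- the antipode -/
  S : H →ₗ[k] H
  /-- its inverse -/
  Sinv : H →ₗ[k] H
  S_Sinv : ∀ h : H, S (Sinv h) = h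
  Sinv_S : ∀ h : H, Sinv (S h) = h
  S_one : S 1 = 1
  S_antimul : ∀ g h : H, S (g * h) = S h * S g
  Sβ : ∀ r : R, S (B.toBgdCore.β r) = B.toBgdCore.α r
  Sinvα : ∀ r : R, Sinv (B.toBgdCore.α r) = B.toBgdCore.β r
  left_axiom : ∀ h : H,
    sandL B.toBgdCore.Δ S 1 (B.toBgdCore.Δ h) - (1 : H) ⊗ₜ[k] S h ∈ B.toBgdCore.iR
  right_axiom : ∀ h : H,
    sandR B.toBgdCore.Δ Sinv 1 (B.toBgdCore.Δ h) - (Sinv h) ⊗ₜ[k] (1 : H) ∈ B.toBgdCore.iR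

/-- A Drinfeld–Xu invertible counital 2-cocycle. -/
structure DXCocycle (B : LeftBialgebroid k R H) where
  /-- a lift of the 2-cocycle -/
  F : H ⊗[k] H
  /-- a lift of its inverse -/
  Fbar : H ⊗[k] H
  counital_l : B.toBgdCore.counitL F = 1
  counital_r : B.toBgdCore.counitR F = 1
  cocycle :
    (TensorProduct.map B.toBgdCore.Δ LinearMap.id) F * (F ⊗ₜ[k] (1 : H))
      - (TensorProduct.assoc k H H H).symm ((TensorProduct.map LinearMap.id B.toBgdCore.Δ) F)
        * (TensorProduct.assoc k H H H).symm ((1 : H) ⊗ₜ[k] F) ∈ B.toBgdCore.iR3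
  inv_right : F * Fbar - 1 ∈ B.toBgdCore.iR
  inv_left : Fbar * F - 1 ∈ Submodule.map (LinearMap.mulLeft k Fbar) B.toBgdCore.iR

namespace DXCocycle

variable {B : LeftBialgebroid k R H} (C : DXCocycle B)

/-- twisted source `α_F(r) = α(F¹ ▷ r) F²`. -/
def alphaF (r : R) : H :=
  B.toBgdCore.counitL (C.F * (B.toBgdCore.α r ⊗ₜ[k] (1 : H)))

/-- twisted target `β_F(r) = β(F² ▷ r) F¹`. -/
def betaF (r : R) : H :=
  B.toBgdCore.counitR (C.F * ((1 : H) ⊗ₜ[k] B.toBgdCore.α r))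

/-- `I_{R_F} = F⁻¹ I_R`, the kernel of `H ⊗ₖ H → H ⊗_{R_F} H`. -/
def iRF : Submodule k (H ⊗[k] H) :=
  Submodule.map (LinearMap.mulLeft k C.Fbar) B.toBgdCore.iR

/-- lift of the twisted comultiplication `Δ_F(h) = F⁻¹ Δ(h) F`. -/
def ΔF : H →ₗ[k] H ⊗[k] H :=
  LinearMap.mulLeft k C.Fbar ∘ₗ LinearMap.mulRight k C.F ∘ₗ B.toBgdCore.Δ

/-- `α_F` as a linear map. -/
def alphaFlin : R →ₗ[k] H :=
  B.toBgdCore.counitL ∘ₗ LinearMap.mulLeft k C.F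
    ∘ₗ (TensorProduct.mk k H H).flip 1 ∘ₗ B.toBgdCore.α.toLinearMap

/-- `β_F` as a linear map. -/
def betaFlin : R →ₗ[k] H :=
  B.toBgdCore.counitR ∘ₗ LinearMap.mulLeft k C.F
    ∘ₗ TensorProduct.mk k H H 1 ∘ₗ B.toBgdCore.α.toLinearMap

/-- left counit constraint of the twisted bialgebroid. -/
def counitLF : H ⊗[k] H →ₗ[k] H :=
  LinearMap.mul' k H ∘ₗ TensorProduct.map (C.alphaFlin ∘ₗ B.toBgdCore.ε) LinearMap.id

/-- right counit constraint of the twisted bialgebroid. -/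
def counitRF : H ⊗[k] H →ₗ[k] H :=
  LinearMap.mul' k H ∘ₗ TensorProduct.map (C.betaFlin ∘ₗ B.toBgdCore.ε) LinearMap.id
    ∘ₗ (TensorProduct.comm k H H).toLinearMap

end DXCocycle


end Bialgebroid

noncomputable section TwistAux

open TensorProduct LinearMap

variable {k R H : Type*} [CommRing k] [Ring R] [Ring H] [Algebra k R] [Algebra k H]

/-- `a ⊗ b ↦ T b * a`; in particular `wm Sinv F = (S⁻¹F²)F¹`. -/
def wm (T : H →ₗ[k] H) : H ⊗[k] H →ₗ[k] H :=
  LinearMap.mul' k H ∘ₗ TensorProduct.map T LinearMap.id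
    ∘ₗ (TensorProduct.comm k H H).toLinearMap

@[simp] lemma wm_tmul (T : H →ₗ[k] H) (a b : H) : wm T (a ⊗ₜ[k] b) = T b * a := by
  simp [wm]

/-- `a ⊗ b ↦ f b * g a`. -/
def phm (f g : H →ₗ[k] H ⊗[k] H) : H ⊗[k] H →ₗ[k] H ⊗[k] H :=
  LinearMap.mul' k (H ⊗[k] H) ∘ₗ TensorProduct.map f g
    ∘ₗ (TensorProduct.comm k H H).toLinearMap

@[simp] lemma phm_tmul (f g : H →ₗ[k] H ⊗[k] H) (a b : H) :
    phm f g (a ⊗ₜ[k] b) = f b * g a := by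
  simp [phm]

@[simp] lemma sandR_tmul (Dl : H →ₗ[k] H ⊗[k] H) (T : H →ₗ[k] H) (Cc : H ⊗[k] H) (a b : H) :
    sandR Dl T Cc (a ⊗ₜ[k] b) = (Dl (T b) * Cc) * ((1 : H) ⊗ₜ[k] a) := by
  simp [sandR]

@[simp] lemma trimapR_tmul (Dl : H →ₗ[k] H ⊗[k] H) (T : H →ₗ[k] H) (E : H ⊗[k] H) (z : H) :
    trimapR Dl T (E ⊗ₜ[k] z) = Dl (T z) * E := by
  simp [trimapR]

@[simp] lemma Vof_tmul (T : H →ₗ[k] H) (a b : H) : Vof T (a ⊗ₜ[k] b) = T a * b := by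
  simp [Vof]

@[simp] lemma SFmap_apply (T : H →ₗ[k] H) (a b x : H) : SFmap T a b x = a * (T x * b) := by
  simp [SFmap]

lemma diff_mem {M : Type*} [AddCommGroup M] [Module k M] (J : Submodule k M)
    (f g : H ⊗[k] H →ₗ[k] M) (hp : ∀ a b : H, f (a ⊗ₜ[k] b) - g (a ⊗ₜ[k] b) ∈ J) (E : H ⊗[k] H) :
    f E - g E ∈ J := by
  induction E using TensorProduct.induction_on with
  | zero => simp
  | tmul a b => exact hp a b
  | add x y hx hy =>
      rw [map_add, map_add]
      have : f x + f y - (g x + g y) = (f x - g x) + (f y - g y) := by abel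
      rw [this]; exact J.add_mem hx hy

end TwistAux

noncomputable section TwistAux2

open TensorProduct LinearMap

variable {k R H : Type*} [CommRing k] [Ring R] [Ring H] [Algebra k R] [Algebra k H]
variable (B : LeftBialgebroid k R H)

lemma iR_gen_mem (r : R) (g g' : H) :
    (B.toBgdCore.β r * g) ⊗ₜ[k] g' - g ⊗ₜ[k] (B.toBgdCore.α r * g') ∈ B.toBgdCore.iR :=
  Submodule.subset_span ⟨r, g, g', rfl⟩

/-- `I_R` is a right ideal. -/
lemma iR_mul {z : H ⊗[k] H} (hz : z ∈ B.toBgdCore.iR) (c : H ⊗[k] H) :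
    z * c ∈ B.toBgdCore.iR := by
  induction hz using Submodule.span_induction generalizing c with
  | mem x hx =>
      obtain ⟨r, g, g', rfl⟩ := hx
      induction c using TensorProduct.induction_on with
      | zero => simpa using B.toBgdCore.iR.zero_mem
      | tmul u v =>
          rw [sub_mul]
          simp only [Algebra.TensorProduct.tmul_mul_tmul]
          rw [mul_assoc, mul_assoc]
          exact iR_gen_mem B r (g * u) (g' * v)
      | add x y hx hy =>
          rw [mul_add]
          exact B.toBgdCore.iR.add_mem hx hy
  | zero => simpa using B.toBgdCore.iR.zero_mem
  | add x y _ _ hx hy =>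
      rw [add_mul]; exact B.toBgdCore.iR.add_mem (hx c) (hy c)
  | smul a x _ hx =>
      rw [smul_mul_assoc]; exact B.toBgdCore.iR.smul_mem a (hx c)

/-- `I_R` is stable under left multiplication by `1 ⊗ β r`. -/
lemma iR_obm (s : R) {z : H ⊗[k] H} (hz : z ∈ B.toBgdCore.iR) :
    ((1 : H) ⊗ₜ[k] B.toBgdCore.β s) * z ∈ B.toBgdCore.iR := by
  induction hz using Submodule.span_induction with
  | mem x hx =>
      obtain ⟨r, g, g', rfl⟩ := hx
      rw [mul_sub]
      simp only [Algebra.TensorProduct.tmul_mul_tmul, one_mul]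
      have h1 : B.toBgdCore.β s * (B.toBgdCore.α r * g')
          = B.toBgdCore.α r * (B.toBgdCore.β s * g') := by
        rw [← mul_assoc, ← B.toBgdCore.αβ_comm, mul_assoc]
      rw [h1]
      exact iR_gen_mem B r g (B.toBgdCore.β s * g')
  | zero => simpa using B.toBgdCore.iR.zero_mem
  | add x y _ _ hx hy =>
      rw [mul_add]; exact B.toBgdCore.iR.add_mem hx hy
  | smul a x _ hx =>
      rw [mul_smul_comm]; exact B.toBgdCore.iR.smul_mem a hx

lemma iR3_mul {z : (H ⊗[k] H) ⊗[k] H} (hz : z ∈ B.toBgdCore.iR3) (c : (H ⊗[k] H) ⊗[k] H) :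
    z * c ∈ B.toBgdCore.iR3 := by
  induction hz using Submodule.span_induction generalizing c with
  | mem x hx =>
      induction c using TensorProduct.induction_on with
      | zero => simpa using (B.toBgdCore.iR3).zero_mem
      | tmul q t =>
          induction q using TensorProduct.induction_on with
          | zero =>
              have : x * ((0 : H ⊗[k] H) ⊗ₜ[k] t) = 0 := by
                rw [zero_tmul, mul_zero]
              rw [this]; exact (B.toBgdCore.iR3).zero_mem
          | tmul u v =>
              rcases hx with hx | hx <;> obtain ⟨r, g, g', g'', rfl⟩ := hx
              · rw [sub_mul]
                simp only [Algebra.TensorProduct.tmul_mul_tmul]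
                exact Submodule.subset_span
                  (Or.inl ⟨r, g * u, g' * v, g'' * t, by simp [mul_assoc]⟩)
              · rw [sub_mul]
                simp only [Algebra.TensorProduct.tmul_mul_tmul]
                exact Submodule.subset_span
                  (Or.inr ⟨r, g * u, g' * v, g'' * t, by simp [mul_assoc]⟩)
          | add q1 q2 h1 h2 =>
              have : x * ((q1 + q2) ⊗ₜ[k] t) = x * (q1 ⊗ₜ[k] t) + x * (q2 ⊗ₜ[k] t) := by
                rw [add_tmul, mul_add]
              rw [this]; exact (B.toBgdCore.iR3).add_mem h1 h2
      | add c1 c2 h1 h2 =>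
          rw [mul_add]; exact (B.toBgdCore.iR3).add_mem h1 h2
  | zero => simpa using (B.toBgdCore.iR3).zero_mem
  | add x y _ _ hx hy =>
      rw [add_mul]; exact (B.toBgdCore.iR3).add_mem (hx c) (hy c)
  | smul a x _ hx =>
      rw [smul_mul_assoc]; exact (B.toBgdCore.iR3).smul_mem a (hx c)

/-- `Δ(β r) ≡ 1 ⊗ β r`. -/
lemma Delta_beta (r : R) :
    B.toBgdCore.Δ (B.toBgdCore.β r) - (1 : H) ⊗ₜ[k] B.toBgdCore.β r ∈ B.toBgdCore.iR := by
  have h1 := B.Δ_bimod 1 r 1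
  simp only [map_one, one_mul, mul_one] at h1
  have h2 : ((1 : H) ⊗ₜ[k] B.toBgdCore.β r) * (B.toBgdCore.Δ 1 - 1) ∈ B.toBgdCore.iR :=
    iR_obm B r B.Δ_one
  have e : B.toBgdCore.Δ (B.toBgdCore.β r) - (1 : H) ⊗ₜ[k] B.toBgdCore.β r
      = (B.toBgdCore.Δ (B.toBgdCore.β r)
          - ((1 : H) ⊗ₜ[k] B.toBgdCore.β r) * B.toBgdCore.Δ 1)
        + ((1 : H) ⊗ₜ[k] B.toBgdCore.β r) * (B.toBgdCore.Δ 1 - 1) := by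
    rw [mul_sub, mul_one]; abel
  rw [e]; exact (B.toBgdCore.iR).add_mem h1 h2

/-- `Δ(x β r) ≡ Δ x · (1 ⊗ β r)`. -/
lemma Delta_mul_beta (x : H) (r : R) :
    B.toBgdCore.Δ (x * B.toBgdCore.β r)
      - B.toBgdCore.Δ x * ((1 : H) ⊗ₜ[k] B.toBgdCore.β r) ∈ B.toBgdCore.iR := by
  have h1 := B.Δ_mul x (B.toBgdCore.β r)
  have h2 : B.toBgdCore.Δ x * (B.toBgdCore.Δ (B.toBgdCore.β r)
      - (1 : H) ⊗ₜ[k] B.toBgdCore.β r) ∈ B.toBgdCore.iR :=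
    B.Δ_ideal x _ (Delta_beta B r)
  have e : B.toBgdCore.Δ (x * B.toBgdCore.β r)
        - B.toBgdCore.Δ x * ((1 : H) ⊗ₜ[k] B.toBgdCore.β r)
      = (B.toBgdCore.Δ (x * B.toBgdCore.β r)
          - B.toBgdCore.Δ x * B.toBgdCore.Δ (B.toBgdCore.β r))
        + B.toBgdCore.Δ x * (B.toBgdCore.Δ (B.toBgdCore.β r)
          - (1 : H) ⊗ₜ[k] B.toBgdCore.β r) := by
    rw [mul_sub]; abel
  rw [e]; exact (B.toBgdCore.iR).add_mem h1 h2

end TwistAux2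

noncomputable section TwistAux3

open TensorProduct LinearMap

variable {k R H : Type*} [CommRing k] [Ring R] [Ring H] [Algebra k R] [Algebra k H]
variable {B : LeftBialgebroid k R H} (A : BSAntipode B) (C : DXCocycle B)

lemma mem_congr {M : Type*} [AddCommGroup M] [Module k M] {J : Submodule k M} {x y : M}
    (h : x ∈ J) (e : y = x) : y ∈ J := e ▸ h

lemma Sinv_one : A.Sinv 1 = 1 := by
  have : A.Sinv (A.S 1) = 1 := A.Sinv_S 1
  rwa [A.S_one] at this

lemma Sinv_mul (a b : H) : A.Sinv (a * b) = A.Sinv b * A.Sinv a := by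
  have h : a * b = A.S (A.Sinv b * A.Sinv a) := by
    rw [A.S_antimul, A.S_Sinv, A.S_Sinv]
  rw [h, A.Sinv_S]

/-- `trimapR Δ S⁻¹` maps `I_R³` into `I_R`. -/
lemma PhiIdeal {z : (H ⊗[k] H) ⊗[k] H} (hz : z ∈ B.toBgdCore.iR3) :
    trimapR B.toBgdCore.Δ A.Sinv z ∈ B.toBgdCore.iR := by
  induction hz using Submodule.span_induction with
  | mem x hx =>
      rcases hx with hx | hx <;> obtain ⟨r, g, g', g'', rfl⟩ := hx
      · rw [map_sub, trimapR_tmul, trimapR_tmul, ← mul_sub]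
        exact B.Δ_ideal _ _ (iR_gen_mem B r g g')
      · rw [map_sub, trimapR_tmul, trimapR_tmul]
        have e1 : A.Sinv (B.toBgdCore.α r * g'') = A.Sinv g'' * B.toBgdCore.β r := by
          rw [Sinv_mul, A.Sinvα]
        rw [e1]
        have h3 := iR_mul B (Delta_mul_beta B (A.Sinv g'') r) (g ⊗ₜ[k] g')
        refine mem_congr (B.toBgdCore.iR.neg_mem h3) ?_
        rw [sub_mul, neg_sub]
        congr 1
        rw [mul_assoc]
        congr 1
        simp [Algebra.TensorProduct.tmul_mul_tmul]
  | zero => simp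
  | add x y _ _ hx hy => rw [map_add]; exact B.toBgdCore.iR.add_mem hx hy
  | smul a x _ hx => rw [map_smul]; exact B.toBgdCore.iR.smul_mem a hx

lemma Phi_mulright (Dl : H →ₗ[k] H ⊗[k] H) (T : H →ₗ[k] H) (z : (H ⊗[k] H) ⊗[k] H)
    (c : H ⊗[k] H) :
    trimapR Dl T (z * (c ⊗ₜ[k] (1 : H))) = trimapR Dl T z * c := by
  induction z using TensorProduct.induction_on with
  | zero => simp
  | tmul q t =>
      rw [Algebra.TensorProduct.tmul_mul_tmul, trimapR_tmul, trimapR_tmul, mul_one, mul_assoc]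
  | add x y hx hy => rw [add_mul, map_add, map_add, hx, hy, add_mul]

lemma KI_L0 :
    trimapR B.toBgdCore.Δ A.Sinv ((TensorProduct.map B.toBgdCore.Δ LinearMap.id) C.F)
      - B.toBgdCore.Δ (wm A.Sinv C.F) ∈ B.toBgdCore.iR := by
  have := diff_mem (B.toBgdCore.iR)
    (trimapR B.toBgdCore.Δ A.Sinv ∘ₗ TensorProduct.map B.toBgdCore.Δ LinearMap.id)
    (B.toBgdCore.Δ ∘ₗ wm A.Sinv) ?_ C.F
  · simpa using this
  · intro a b
    simp only [coe_comp, Function.comp_apply, map_tmul, id_coe, id_eq, trimapR_tmul, wm_tmul]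
    exact mem_congr (B.toBgdCore.iR.neg_mem (B.Δ_mul (A.Sinv b) a)) (by rw [neg_sub])

lemma KI_R0 :
    trimapR B.toBgdCore.Δ A.Sinv
        ((TensorProduct.assoc k H H H).symm ((TensorProduct.map LinearMap.id B.toBgdCore.Δ) C.F)
          * (TensorProduct.assoc k H H H).symm ((1 : H) ⊗ₜ[k] C.F))
      - phm (B.toBgdCore.Δ ∘ₗ A.Sinv) (TensorProduct.mk k H H (wm A.Sinv C.F)) C.F
      ∈ B.toBgdCore.iR := by
  set Φ := trimapR B.toBgdCore.Δ A.Sinv with hΦ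
  set A' := (TensorProduct.assoc k H H H).symm
      ((TensorProduct.map LinearMap.id B.toBgdCore.Δ) C.F) with hA'
  have key : ∀ e f : H,
      Φ (A' * (((1 : H) ⊗ₜ[k] e) ⊗ₜ[k] f))
        - B.toBgdCore.Δ (A.Sinv f) * ((wm A.Sinv C.F) ⊗ₜ[k] e) ∈ B.toBgdCore.iR := by
    intro e f
    set Rm : H ⊗[k] H →ₗ[k] H ⊗[k] H :=
      Φ ∘ₗ mulRight k (((1 : H) ⊗ₜ[k] e) ⊗ₜ[k] f)
        ∘ₗ (TensorProduct.assoc k H H H).symm.toLinearMap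
        ∘ₗ TensorProduct.map LinearMap.id B.toBgdCore.Δ with hRm
    set Nm : H ⊗[k] H →ₗ[k] H ⊗[k] H :=
      mulLeft k (B.toBgdCore.Δ (A.Sinv f)) ∘ₗ ((TensorProduct.mk k H H).flip e)
        ∘ₗ wm A.Sinv with hNm
    have hin : ∀ c d : H, Rm (c ⊗ₜ[k] d) - Nm (c ⊗ₜ[k] d) ∈ B.toBgdCore.iR := by
      intro c d
      set R' : H ⊗[k] H →ₗ[k] H ⊗[k] H :=
        Φ ∘ₗ mulRight k (((1 : H) ⊗ₜ[k] e) ⊗ₜ[k] f)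
          ∘ₗ (TensorProduct.assoc k H H H).symm.toLinearMap
          ∘ₗ TensorProduct.mk k H (H ⊗[k] H) c with hR'
      set T' : H ⊗[k] H →ₗ[k] H ⊗[k] H :=
        mulLeft k (B.toBgdCore.Δ (A.Sinv f)) ∘ₗ mulRight k (c ⊗ₜ[k] e)
          ∘ₗ sandR B.toBgdCore.Δ A.Sinv 1 with hT'
      have hpp : ∀ p q : H, R' (p ⊗ₜ[k] q) - T' (p ⊗ₜ[k] q) ∈ B.toBgdCore.iR := by
        intro p q
        have hmem := iR_mul B (B.Δ_mul (A.Sinv f) (A.Sinv q)) (c ⊗ₜ[k] (p * e))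
        refine mem_congr hmem ?_
        simp only [hR', hT', hΦ, coe_comp, Function.comp_apply, mk_apply,
          LinearEquiv.coe_coe, TensorProduct.assoc_symm_tmul, mulRight_apply, mulLeft_apply,
          sandR_tmul, trimapR_tmul, Algebra.TensorProduct.tmul_mul_tmul,
          mul_one, one_mul, sub_mul, mul_sub]
        rw [Sinv_mul A q f]
        simp [Algebra.TensorProduct.tmul_mul_tmul, mul_assoc]
      have h1 : R' (B.toBgdCore.Δ d) - T' (B.toBgdCore.Δ d) ∈ B.toBgdCore.iR :=
        diff_mem _ R' T' hpp (B.toBgdCore.Δ d)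
      have h2 : T' (B.toBgdCore.Δ d) - Nm (c ⊗ₜ[k] d) ∈ B.toBgdCore.iR := by
        have hmem := B.Δ_ideal (A.Sinv f) _
          (iR_mul B (A.right_axiom d) (c ⊗ₜ[k] e))
        refine mem_congr hmem ?_
        simp only [hT', hNm, coe_comp, Function.comp_apply, mulRight_apply, mulLeft_apply,
          flip_apply, mk_apply, wm_tmul, sub_mul, mul_sub,
          Algebra.TensorProduct.tmul_mul_tmul, mul_one, one_mul]
      have e3 : Rm (c ⊗ₜ[k] d) = R' (B.toBgdCore.Δ d) := by
        simp only [hRm, hR', coe_comp, Function.comp_apply, map_tmul, id_coe, id_eq, mk_apply]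
      rw [e3]
      refine mem_congr (B.toBgdCore.iR.add_mem h1 h2) ?_
      abel
    have := diff_mem (B.toBgdCore.iR) Rm Nm hin C.F
    refine mem_congr this ?_
    simp only [hRm, hNm, hΦ, coe_comp, Function.comp_apply, LinearEquiv.coe_coe,
      mulRight_apply, mulLeft_apply, flip_apply, mk_apply]
    rw [hA']
  -- now outer induction over the second copy of `F`
  set Q : H ⊗[k] H →ₗ[k] H ⊗[k] H :=
    Φ ∘ₗ mulLeft k A' ∘ₗ (TensorProduct.assoc k H H H).symm.toLinearMap
      ∘ₗ TensorProduct.mk k H (H ⊗[k] H) 1 with hQ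
  have houter : ∀ e f : H,
      Q (e ⊗ₜ[k] f)
        - phm (B.toBgdCore.Δ ∘ₗ A.Sinv) (TensorProduct.mk k H H (wm A.Sinv C.F)) (e ⊗ₜ[k] f)
        ∈ B.toBgdCore.iR := by
    intro e f
    have := key e f
    refine mem_congr this ?_
    simp only [hQ, coe_comp, Function.comp_apply, mk_apply, LinearEquiv.coe_coe,
      TensorProduct.assoc_symm_tmul, mulLeft_apply, phm_tmul]
  have := diff_mem (B.toBgdCore.iR) Q
    (phm (B.toBgdCore.Δ ∘ₗ A.Sinv) (TensorProduct.mk k H H (wm A.Sinv C.F))) houter C.F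
  refine mem_congr this ?_
  simp only [hQ, coe_comp, Function.comp_apply, mk_apply, LinearEquiv.coe_coe, mulLeft_apply]

end TwistAux3

noncomputable section TwistAux4

open TensorProduct LinearMap

variable {k R H : Type*} [CommRing k] [Ring R] [Ring H] [Algebra k R] [Algebra k H]
variable {B : LeftBialgebroid k R H} (A : BSAntipode B) (C : DXCocycle B)

/-- The key cocycle identity: `Σ Δ(S⁻¹F²)(W ⊗ F¹) ≡ Δ(W)·F mod I_R`. -/
lemma KI :
    B.toBgdCore.Δ (wm A.Sinv C.F) * C.F
      - phm (B.toBgdCore.Δ ∘ₗ A.Sinv) (TensorProduct.mk k H H (wm A.Sinv C.F)) C.F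
      ∈ B.toBgdCore.iR := by
  have hd := PhiIdeal A C.cocycle
  rw [map_sub] at hd
  have hL := Phi_mulright B.toBgdCore.Δ A.Sinv
    ((TensorProduct.map B.toBgdCore.Δ LinearMap.id) C.F) C.F
  have h1 := iR_mul B (KI_L0 A C) C.F
  have h2 := KI_R0 A C
  refine mem_congr (B.toBgdCore.iR.add_mem (B.toBgdCore.iR.add_mem
    (B.toBgdCore.iR.neg_mem h1) hd) h2) ?_
  rw [hL, sub_mul]
  abel

/-- `Σ Δ(S⁻¹F²)(Wx ⊗ F¹y) ≡ Δ(W)·F·(x⊗y) mod I_R`. -/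
lemma L_KI (x y : H) :
    phm (B.toBgdCore.Δ ∘ₗ A.Sinv) (TensorProduct.mk k H H (wm A.Sinv C.F)) C.F * (x ⊗ₜ[k] y)
      - B.toBgdCore.Δ (wm A.Sinv C.F) * (C.F * (x ⊗ₜ[k] y)) ∈ B.toBgdCore.iR := by
  have h := iR_mul B (KI A C) (x ⊗ₜ[k] y)
  refine mem_congr (B.toBgdCore.iR.neg_mem h) ?_
  rw [sub_mul, neg_sub, mul_assoc]

lemma Sinv_Vof (z : H ⊗[k] H) : A.Sinv (Vof A.S z) = wm A.Sinv z := by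
  induction z using TensorProduct.induction_on with
  | zero => simp [Vof]
  | tmul a b => rw [Vof_tmul, wm_tmul, Sinv_mul, A.Sinv_S]
  | add x y hx hy =>
      simp only [Vof, map_add] at hx hy ⊢
      rw [hx, hy]

/-- left multiplication into `Θ₄`-type maps preserves `I_R`. -/
lemma theta_ideal (Wb Wl : H) {z : H ⊗[k] H} (hz : z ∈ B.toBgdCore.iR) (c : H ⊗[k] H) :
    phm (B.toBgdCore.Δ ∘ₗ mulLeft k Wb ∘ₗ A.Sinv) (TensorProduct.mk k H H Wl) (z * c)
      ∈ B.toBgdCore.iR := by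
  induction hz using Submodule.span_induction generalizing c with
  | mem x hx =>
      obtain ⟨r, g, g', rfl⟩ := hx
      induction c using TensorProduct.induction_on with
      | zero => simp
      | tmul u v =>
          rw [sub_mul, map_sub]
          simp only [Algebra.TensorProduct.tmul_mul_tmul, phm_tmul, coe_comp,
            Function.comp_apply, mulLeft_apply, mk_apply]
          have e1 : A.Sinv (B.toBgdCore.α r * g' * v)
              = A.Sinv (g' * v) * B.toBgdCore.β r := by
            rw [mul_assoc, Sinv_mul, A.Sinvα]
          rw [e1]
          have hmem := iR_mul B (Delta_mul_beta B (Wb * A.Sinv (g' * v)) r)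
            (Wl ⊗ₜ[k] (g * u))
          refine mem_congr (B.toBgdCore.iR.neg_mem hmem) ?_
          rw [sub_mul, neg_sub]
          simp [Algebra.TensorProduct.tmul_mul_tmul, mul_assoc]
      | add c1 c2 h1 h2 =>
          rw [mul_add, map_add]; exact B.toBgdCore.iR.add_mem h1 h2
  | zero => simp
  | add x y _ _ hx hy =>
      rw [add_mul, map_add]; exact B.toBgdCore.iR.add_mem (hx c) (hy c)
  | smul a x _ hx =>
      rw [smul_mul_assoc, map_smul]; exact B.toBgdCore.iR.smul_mem a (hx c)

end TwistAux4

variable {k R H : Type*} [CommRing k] [Ring R] [Ring H] [Algebra k R] [Algebra k H]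

open LinearMap

/-- `S_F⁻¹` satisfies the right antipode axiom for the twisted bialgebroid:
`(S_F⁻¹h₍₂F₎)₍₁F₎ ⊗_{R_F} (S_F⁻¹h₍₂F₎)₍₂F₎h₍₁F₎ = S_F⁻¹h ⊗_{R_F} 1`. -/
theorem SFinv_right_antipode_axiom (B : LeftBialgebroid k R H) (A : BSAntipode B)
    (C : DXCocycle B) (Vinv : H)
    (hV1 : Vof A.S C.F * Vinv = 1) (hV2 : Vinv * Vof A.S C.F = 1) (h : H) :
    sandR C.ΔF (SFmap A.Sinv (A.Sinv Vinv) (A.Sinv (Vof A.S C.F))) 1 (C.ΔF h)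
      - (SFmap A.Sinv (A.Sinv Vinv) (A.Sinv (Vof A.S C.F)) h) ⊗ₜ[k] (1 : H) ∈ C.iRF := by
  have hWform : A.Sinv (Vof A.S C.F) = wm A.Sinv C.F := Sinv_Vof A C.F
  rw [hWform]
  have hWbW : A.Sinv Vinv * wm A.Sinv C.F = 1 := by
    rw [← hWform, ← Sinv_mul A, hV1, Sinv_one A]
  have hWW : wm A.Sinv C.F * A.Sinv Vinv = 1 := by
    rw [← hWform, ← Sinv_mul A, hV2, Sinv_one A]
  set Tm := SFmap A.Sinv (A.Sinv Vinv) (wm A.Sinv C.F) with hTm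
  set E1 := C.ΔF h with hE1
  set N := phm (B.toBgdCore.Δ ∘ₗ A.Sinv)
    (TensorProduct.mk k H H (wm A.Sinv C.F)) with hN
  set Th := phm (B.toBgdCore.Δ ∘ₗ mulLeft k (A.Sinv Vinv) ∘ₗ A.Sinv)
    (TensorProduct.mk k H H (wm A.Sinv C.F)) with hTh
  set q := sandR B.toBgdCore.Δ A.Sinv 1 (B.toBgdCore.Δ h) with hq
  set M5 := phm (mulRight k q ∘ₗ B.toBgdCore.Δ ∘ₗ mulLeft k (A.Sinv Vinv) ∘ₗ A.Sinv)
    (TensorProduct.mk k H H (wm A.Sinv C.F)) with hM5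
  set M6 := phm (B.toBgdCore.Δ ∘ₗ mulLeft k (A.Sinv Vinv) ∘ₗ A.Sinv)
    (TensorProduct.mk k H H (A.Sinv h * wm A.Sinv C.F)) with hM6
  set M7 := phm (mulLeft k (B.toBgdCore.Δ (A.Sinv Vinv)) ∘ₗ B.toBgdCore.Δ ∘ₗ A.Sinv)
    (TensorProduct.mk k H H (A.Sinv h * wm A.Sinv C.F)) with hM7
  -- Step A : pull `Fbar` out of the twisted sandR
  have stepA : ∀ E : H ⊗[k] H,
      sandR C.ΔF Tm 1 E = C.Fbar * (sandR B.toBgdCore.Δ Tm C.F E) := by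
    intro E
    induction E using TensorProduct.induction_on with
    | zero => simp
    | tmul a b =>
        rw [sandR_tmul, sandR_tmul]
        simp only [DXCocycle.ΔF, coe_comp, Function.comp_apply, mulLeft_apply, mulRight_apply]
        rw [mul_one, mul_assoc]
    | add x y hx hy => rw [map_add, map_add, hx, hy, mul_add]
  -- d01
  have d01 : sandR B.toBgdCore.Δ Tm C.F E1 - Th (C.F * E1) ∈ B.toBgdCore.iR := by
    have hpure : ∀ a b : H,
        sandR B.toBgdCore.Δ Tm C.F (a ⊗ₜ[k] b)
          - (Th ∘ₗ mulLeft k C.F) (a ⊗ₜ[k] b) ∈ B.toBgdCore.iR := by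
      intro a b
      have h1 : (B.toBgdCore.Δ (Tm b) * C.F) * ((1:H) ⊗ₜ[k] a)
          - B.toBgdCore.Δ (A.Sinv Vinv * A.Sinv b)
            * (B.toBgdCore.Δ (wm A.Sinv C.F) * (C.F * ((1:H) ⊗ₜ[k] a)))
          ∈ B.toBgdCore.iR := by
        have hm := iR_mul B (B.Δ_mul (A.Sinv Vinv * A.Sinv b) (wm A.Sinv C.F))
          (C.F * ((1:H) ⊗ₜ[k] a))
        refine mem_congr hm ?_
        rw [hTm]
        simp [sub_mul, mul_assoc]
      have h2 : B.toBgdCore.Δ (A.Sinv Vinv * A.Sinv b) * (N C.F * ((1:H) ⊗ₜ[k] a))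
          - B.toBgdCore.Δ (A.Sinv Vinv * A.Sinv b)
            * (B.toBgdCore.Δ (wm A.Sinv C.F) * (C.F * ((1:H) ⊗ₜ[k] a)))
          ∈ B.toBgdCore.iR := by
        have hm := B.Δ_ideal (A.Sinv Vinv * A.Sinv b) _ (L_KI A C 1 a)
        refine mem_congr hm ?_
        rw [hN, mul_sub]
      have h3 : B.toBgdCore.Δ (A.Sinv Vinv * A.Sinv b) * (N C.F * ((1:H) ⊗ₜ[k] a))
          - (Th ∘ₗ mulLeft k C.F) (a ⊗ₜ[k] b) ∈ B.toBgdCore.iR := by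
        have hp : ∀ c d : H,
            (mulLeft k (B.toBgdCore.Δ (A.Sinv Vinv * A.Sinv b))
              ∘ₗ mulRight k ((1:H) ⊗ₜ[k] a) ∘ₗ N) (c ⊗ₜ[k] d)
              - (Th ∘ₗ mulRight k (a ⊗ₜ[k] b)) (c ⊗ₜ[k] d) ∈ B.toBgdCore.iR := by
          intro c d
          have hm := iR_mul B (B.Δ_mul (A.Sinv Vinv * A.Sinv b) (A.Sinv d))
            ((wm A.Sinv C.F) ⊗ₜ[k] (c * a))
          refine mem_congr (B.toBgdCore.iR.neg_mem hm) ?_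
          rw [hN, hTh, sub_mul, neg_sub]
          simp only [coe_comp, Function.comp_apply, mulLeft_apply, mulRight_apply,
            phm_tmul, TensorProduct.mk_apply, Algebra.TensorProduct.tmul_mul_tmul]
          rw [Sinv_mul A d b]
          simp [Algebra.TensorProduct.tmul_mul_tmul, mul_assoc]
        have hdm := diff_mem _ _ _ hp C.F
        refine mem_congr hdm ?_
        simp only [coe_comp, Function.comp_apply, mulLeft_apply, mulRight_apply]
      refine mem_congr (B.toBgdCore.iR.add_mem (B.toBgdCore.iR.sub_mem h1 h2) h3) ?_
      rw [sandR_tmul]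
      abel
    have hdm := diff_mem _ _ _ hpure E1
    refine mem_congr hdm ?_
    simp only [coe_comp, Function.comp_apply, mulLeft_apply]
  -- d12
  have d12 : Th (C.F * E1) - Th (B.toBgdCore.Δ h * C.F) ∈ B.toBgdCore.iR := by
    have e : C.F * E1 - B.toBgdCore.Δ h * C.F
        = (C.F * C.Fbar - 1) * (B.toBgdCore.Δ h * C.F) := by
      rw [hE1]
      simp only [DXCocycle.ΔF, coe_comp, Function.comp_apply, mulLeft_apply, mulRight_apply]
      rw [sub_mul, one_mul, mul_assoc]
    rw [← map_sub, e, hTh]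
    exact theta_ideal A (A.Sinv Vinv) (wm A.Sinv C.F) C.inv_right (B.toBgdCore.Δ h * C.F)
  -- d23
  have d23 : Th (B.toBgdCore.Δ h * C.F) - M5 C.F ∈ B.toBgdCore.iR := by
    have hp : ∀ c d : H,
        (Th ∘ₗ mulLeft k (B.toBgdCore.Δ h)) (c ⊗ₜ[k] d) - M5 (c ⊗ₜ[k] d)
          ∈ B.toBgdCore.iR := by
      intro c d
      have hin : ∀ u v : H,
          (Th ∘ₗ mulRight k (c ⊗ₜ[k] d)) (u ⊗ₜ[k] v)
            - (mulLeft k (B.toBgdCore.Δ (A.Sinv Vinv * A.Sinv d))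
                ∘ₗ mulRight k ((wm A.Sinv C.F) ⊗ₜ[k] c)
                ∘ₗ sandR B.toBgdCore.Δ A.Sinv 1) (u ⊗ₜ[k] v) ∈ B.toBgdCore.iR := by
        intro u v
        have hm := iR_mul B (B.Δ_mul (A.Sinv Vinv * A.Sinv d) (A.Sinv v))
          ((wm A.Sinv C.F) ⊗ₜ[k] (u * c))
        refine mem_congr hm ?_
        rw [hTh, sub_mul]
        simp only [coe_comp, Function.comp_apply, mulLeft_apply, mulRight_apply,
          phm_tmul, TensorProduct.mk_apply, sandR_tmul,
          Algebra.TensorProduct.tmul_mul_tmul]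
        rw [Sinv_mul A v d]
        simp [Algebra.TensorProduct.tmul_mul_tmul, mul_assoc]
      have hdm := diff_mem _ _ _ hin (B.toBgdCore.Δ h)
      refine mem_congr hdm ?_
      rw [hM5, hq]
      simp only [coe_comp, Function.comp_apply, mulLeft_apply, mulRight_apply, phm_tmul,
        TensorProduct.mk_apply]
      rw [mul_assoc]
    have hdm := diff_mem _ _ _ hp C.F
    refine mem_congr hdm ?_
    simp only [coe_comp, Function.comp_apply, mulLeft_apply]
  -- d34
  have d34 : M5 C.F - M6 C.F ∈ B.toBgdCore.iR := by
    have hp : ∀ c d : H, M5 (c ⊗ₜ[k] d) - M6 (c ⊗ₜ[k] d) ∈ B.toBgdCore.iR := by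
      intro c d
      have hm := B.Δ_ideal (A.Sinv Vinv * A.Sinv d) _
        (iR_mul B (A.right_axiom h) ((wm A.Sinv C.F) ⊗ₜ[k] c))
      refine mem_congr hm ?_
      rw [hM5, hM6, hq]
      simp only [coe_comp, Function.comp_apply, mulLeft_apply, mulRight_apply, phm_tmul,
        TensorProduct.mk_apply, sub_mul, mul_sub, Algebra.TensorProduct.tmul_mul_tmul]
      simp [mul_assoc]
    exact diff_mem _ _ _ hp C.F
  -- d45
  have d45 : M6 C.F - M7 C.F ∈ B.toBgdCore.iR := by
    have hp : ∀ c d : H, M6 (c ⊗ₜ[k] d) - M7 (c ⊗ₜ[k] d) ∈ B.toBgdCore.iR := by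
      intro c d
      have hm := iR_mul B (B.Δ_mul (A.Sinv Vinv) (A.Sinv d))
        ((A.Sinv h * wm A.Sinv C.F) ⊗ₜ[k] c)
      refine mem_congr hm ?_
      rw [hM6, hM7, sub_mul]
      simp only [coe_comp, Function.comp_apply, mulLeft_apply, phm_tmul,
        TensorProduct.mk_apply]
    exact diff_mem _ _ _ hp C.F
  -- d56 : pure algebraic identity
  have d56 : M7 C.F
      - B.toBgdCore.Δ (A.Sinv Vinv) * (N C.F * (Tm h ⊗ₜ[k] (1:H))) ∈ B.toBgdCore.iR := by
    have hp : ∀ c d : H, M7 (c ⊗ₜ[k] d)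
        - (mulLeft k (B.toBgdCore.Δ (A.Sinv Vinv))
            ∘ₗ mulRight k (Tm h ⊗ₜ[k] (1:H)) ∘ₗ N) (c ⊗ₜ[k] d) ∈ B.toBgdCore.iR := by
      intro c d
      refine mem_congr (B.toBgdCore.iR.zero_mem) ?_
      rw [sub_eq_zero, hM7, hN, hTm]
      simp only [coe_comp, Function.comp_apply, mulLeft_apply, mulRight_apply, phm_tmul,
        TensorProduct.mk_apply, SFmap_apply, Algebra.TensorProduct.tmul_mul_tmul, mul_one]
      simp only [mul_assoc, Algebra.TensorProduct.tmul_mul_tmul, mul_one, one_mul]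
      simp only [← mul_assoc]
      rw [hWW]
      simp [mul_assoc]
    have hdm := diff_mem _ _ _ hp C.F
    refine mem_congr hdm ?_
    simp only [coe_comp, Function.comp_apply, mulLeft_apply, mulRight_apply]
  -- d67
  have d67 : B.toBgdCore.Δ (A.Sinv Vinv) * (N C.F * (Tm h ⊗ₜ[k] (1:H)))
      - B.toBgdCore.Δ (A.Sinv Vinv)
          * (B.toBgdCore.Δ (wm A.Sinv C.F) * (C.F * (Tm h ⊗ₜ[k] (1:H))))
        ∈ B.toBgdCore.iR := by
    have hm := B.Δ_ideal (A.Sinv Vinv) _ (L_KI A C (Tm h) 1)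
    refine mem_congr hm ?_
    rw [hN, mul_sub]
  -- d78
  have d78 : B.toBgdCore.Δ (A.Sinv Vinv)
        * (B.toBgdCore.Δ (wm A.Sinv C.F) * (C.F * (Tm h ⊗ₜ[k] (1:H))))
      - C.F * (Tm h ⊗ₜ[k] (1:H)) ∈ B.toBgdCore.iR := by
    have p2 := iR_mul B (B.Δ_mul (A.Sinv Vinv) (wm A.Sinv C.F)) (C.F * (Tm h ⊗ₜ[k] (1:H)))
    rw [hWbW] at p2
    have p4 := iR_mul B B.Δ_one (C.F * (Tm h ⊗ₜ[k] (1:H)))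
    refine mem_congr (B.toBgdCore.iR.add_mem (B.toBgdCore.iR.neg_mem p2) p4) ?_
    rw [sub_mul, sub_mul, one_mul, neg_sub, ← mul_assoc]
    abel
  -- assemble
  have main : sandR B.toBgdCore.Δ Tm C.F E1 - C.F * (Tm h ⊗ₜ[k] (1:H)) ∈ B.toBgdCore.iR := by
    have e : sandR B.toBgdCore.Δ Tm C.F E1 - C.F * (Tm h ⊗ₜ[k] (1:H))
        = (sandR B.toBgdCore.Δ Tm C.F E1 - Th (C.F * E1))
          + (Th (C.F * E1) - Th (B.toBgdCore.Δ h * C.F))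
          + (Th (B.toBgdCore.Δ h * C.F) - M5 C.F)
          + (M5 C.F - M6 C.F) + (M6 C.F - M7 C.F)
          + (M7 C.F - B.toBgdCore.Δ (A.Sinv Vinv) * (N C.F * (Tm h ⊗ₜ[k] (1:H))))
          + (B.toBgdCore.Δ (A.Sinv Vinv) * (N C.F * (Tm h ⊗ₜ[k] (1:H)))
              - B.toBgdCore.Δ (A.Sinv Vinv)
                * (B.toBgdCore.Δ (wm A.Sinv C.F) * (C.F * (Tm h ⊗ₜ[k] (1:H)))))
          + (B.toBgdCore.Δ (A.Sinv Vinv)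
                * (B.toBgdCore.Δ (wm A.Sinv C.F) * (C.F * (Tm h ⊗ₜ[k] (1:H))))
              - C.F * (Tm h ⊗ₜ[k] (1:H))) := by abel
    rw [e]
    exact B.toBgdCore.iR.add_mem (B.toBgdCore.iR.add_mem (B.toBgdCore.iR.add_mem
      (B.toBgdCore.iR.add_mem (B.toBgdCore.iR.add_mem (B.toBgdCore.iR.add_mem
        (B.toBgdCore.iR.add_mem d01 d12) d23) d34) d45) d56) d67) d78
  rw [stepA E1]
  obtain ⟨z, hz, hzE⟩ := Submodule.mem_map.mp C.inv_left
  rw [mulLeft_apply] at hzE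
  have t1 : C.Fbar * (sandR B.toBgdCore.Δ Tm C.F E1 - C.F * (Tm h ⊗ₜ[k] (1:H)))
      ∈ C.iRF := ⟨_, main, by rw [mulLeft_apply]⟩
  have t2 : (C.Fbar * C.F - 1) * (Tm h ⊗ₜ[k] (1:H)) ∈ C.iRF := by
    refine ⟨z * (Tm h ⊗ₜ[k] (1:H)), iR_mul B hz _, ?_⟩
    rw [mulLeft_apply, ← mul_assoc, hzE]
  refine mem_congr (Submodule.add_mem _ t1 t2) ?_
  rw [mul_sub, sub_mul, one_mul, ← mul_assoc]
  abel
end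

section
/- Main theorem: Let H = (H, α, β, Δ, ε, S) be a left Hopf R-algebroid with invertible antipode S and F ∈ H⊗_R H an invertible counital 2-cocycle such that V_F = (SF¹)F² is invertible in H. Then S_F : h ↦ V_F⁻¹(Sh)V_F is an invertible antipode for the twisted R_F-bialgebroid H_F = (H, α_F, β_F, Δ_F, ε_F), with inverse S_F⁻¹ : h ↦ (S⁻¹V_F⁻¹)(S⁻¹h)(S⁻¹V_F). -/
open TensorProduct

variable {k R H : Type*} [CommRing k] [Ring R] [Ring H] [Algebra k R] [Algebra k H]


namespace TwistProofAux

open BgdCore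

variable {k R H : Type*} [CommRing k] [Ring R] [Ring H] [Algebra k R] [Algebra k H]
variable {B : LeftBialgebroid k R H}

local notation "αm" => B.toBgdCore.α
local notation "βm" => B.toBgdCore.β
local notation "Δm" => B.toBgdCore.Δ
local notation "εm" => B.toBgdCore.ε
local notation "J" => B.toBgdCore.iR
local notation "J3" => B.toBgdCore.iR3

/-! ### generic helpers -/

lemma cong_tmul {M N P : Type*} [AddCommGroup M] [AddCommGroup N] [AddCommGroup P]
    [Module k M] [Module k N] [Module k P]
    (L L' : M ⊗[k] N →ₗ[k] P) (Q : Submodule k P)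
    (h : ∀ x y, L (x ⊗ₜ[k] y) - L' (x ⊗ₜ[k] y) ∈ Q) (u : M ⊗[k] N) : L u - L' u ∈ Q := by
  induction u using TensorProduct.induction_on with
  | zero => simpa using Q.zero_mem
  | tmul x y => exact h x y
  | add x y hx hy =>
      have := Q.add_mem hx hy
      rw [map_add, map_add]
      convert this using 1
      abel

lemma cong_tmul3 {M N N' P : Type*} [AddCommGroup M] [AddCommGroup N] [AddCommGroup N']
    [AddCommGroup P] [Module k M] [Module k N] [Module k N'] [Module k P]
    (L L' : (M ⊗[k] N) ⊗[k] N' →ₗ[k] P) (Q : Submodule k P)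
    (h : ∀ x y z, L ((x ⊗ₜ[k] y) ⊗ₜ[k] z) - L' ((x ⊗ₜ[k] y) ⊗ₜ[k] z) ∈ Q)
    (u : (M ⊗[k] N) ⊗[k] N') : L u - L' u ∈ Q := by
  refine cong_tmul L L' Q (fun w z => ?_) u
  induction w using TensorProduct.induction_on with
  | zero => simpa using Q.zero_mem
  | tmul x y => exact h x y z
  | add x y hx hy =>
      have := Q.add_mem hx hy
      rw [add_tmul, map_add, map_add]
      convert this using 1
      abel

/-! ### basic facts about `iR` -/

lemma gen_mem (r : R) (g g' : H) :
    (βm r * g) ⊗ₜ[k] g' - g ⊗ₜ[k] (αm r * g') ∈ J :=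
  Submodule.subset_span ⟨r, g, g', rfl⟩

lemma map_iR_le {P : Type*} [AddCommGroup P] [Module k P]
    (L : H ⊗[k] H →ₗ[k] P) (Q : Submodule k P)
    (h : ∀ r g g', L ((βm r * g) ⊗ₜ[k] g' - g ⊗ₜ[k] (αm r * g')) ∈ Q) :
    ∀ u ∈ J, L u ∈ Q := by
  intro u hu
  induction hu using Submodule.span_induction with
  | mem x hx => obtain ⟨r, g, g', rfl⟩ := hx; exact h r g g'
  | zero => simpa using Q.zero_mem
  | add x y _ _ hx hy => rw [map_add]; exact Q.add_mem hx hy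
  | smul a x _ hx => rw [map_smul]; exact Q.smul_mem a hx

lemma map_iR3_le {P : Type*} [AddCommGroup P] [Module k P]
    (L : (H ⊗[k] H) ⊗[k] H →ₗ[k] P) (Q : Submodule k P)
    (h1 : ∀ r g g' g'', L (((βm r * g) ⊗ₜ[k] g') ⊗ₜ[k] g''
              - (g ⊗ₜ[k] (αm r * g')) ⊗ₜ[k] g'') ∈ Q)
    (h2 : ∀ r g g' g'', L ((g ⊗ₜ[k] (βm r * g')) ⊗ₜ[k] g''
              - (g ⊗ₜ[k] g') ⊗ₜ[k] (αm r * g'')) ∈ Q) :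
    ∀ u ∈ J3, L u ∈ Q := by
  intro u hu
  induction hu using Submodule.span_induction with
  | mem x hx =>
      rcases hx with hx | hx
      · obtain ⟨r, g, g', g'', rfl⟩ := hx; exact h1 r g g' g''
      · obtain ⟨r, g, g', g'', rfl⟩ := hx; exact h2 r g g' g''
  | zero => simpa using Q.zero_mem
  | add x y _ _ hx hy => rw [map_add]; exact Q.add_mem hx hy
  | smul a x _ hx => rw [map_smul]; exact Q.smul_mem a hx

lemma iR_mul_right {u : H ⊗[k] H} (hu : u ∈ J) (v : H ⊗[k] H) : u * v ∈ J := by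
  induction hu using Submodule.span_induction with
  | mem x hx =>
    obtain ⟨r, g, g', rfl⟩ := hx
    induction v using TensorProduct.induction_on with
    | zero => simpa using Submodule.zero_mem J
    | tmul a b =>
        rw [sub_mul]
        simp only [Algebra.TensorProduct.tmul_mul_tmul, mul_assoc]
        exact gen_mem r (g * a) (g' * b)
    | add x y hx hy => rw [mul_add]; exact Submodule.add_mem _ hx hy
  | zero => simpa using Submodule.zero_mem J
  | add x y _ _ hx hy => rw [add_mul]; exact Submodule.add_mem _ hx hy
  | smul a x _ hx => rw [smul_mul_assoc]; exact Submodule.smul_mem _ _ hx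

lemma Δ_mul_iR (x : H) {u : H ⊗[k] H} (hu : u ∈ J) : Δm x * u ∈ J :=
  B.Δ_ideal x u hu

lemma alpha1_mul_iR (r : R) {u : H ⊗[k] H} (hu : u ∈ J) :
    ((αm r) ⊗ₜ[k] (1 : H)) * u ∈ J := by
  induction hu using Submodule.span_induction with
  | mem x hx =>
    obtain ⟨s, g, g', rfl⟩ := hx
    rw [mul_sub]
    simp only [Algebra.TensorProduct.tmul_mul_tmul, one_mul]
    have h1 : αm r * (βm s * g) = βm s * (αm r * g) := by
      rw [← mul_assoc, B.toBgdCore.αβ_comm, mul_assoc]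
    rw [h1]
    exact gen_mem s (αm r * g) g'
  | zero => simpa using Submodule.zero_mem J
  | add x y _ _ hx hy => rw [mul_add]; exact Submodule.add_mem _ hx hy
  | smul a x _ hx => rw [mul_smul_comm]; exact Submodule.smul_mem _ _ hx

lemma beta2_mul_iR (r : R) {u : H ⊗[k] H} (hu : u ∈ J) :
    ((1 : H) ⊗ₜ[k] (βm r)) * u ∈ J := by
  induction hu using Submodule.span_induction with
  | mem x hx =>
    obtain ⟨s, g, g', rfl⟩ := hx
    rw [mul_sub]
    simp only [Algebra.TensorProduct.tmul_mul_tmul, one_mul]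
    have h1 : βm r * (αm s * g') = αm s * (βm r * g') := by
      rw [← mul_assoc, ← B.toBgdCore.αβ_comm, mul_assoc]
    rw [h1]
    exact gen_mem s g (βm r * g')
  | zero => simpa using Submodule.zero_mem J
  | add x y _ _ hx hy => rw [mul_add]; exact Submodule.add_mem _ hx hy
  | smul a x _ hx => rw [mul_smul_comm]; exact Submodule.smul_mem _ _ hx


/-! ### application lemmas for the given definitions -/

@[simp] lemma counitL_tmul (x y : H) :
    B.toBgdCore.counitL (x ⊗ₜ[k] y) = αm (εm x) * y := by
  simp [BgdCore.counitL]

@[simp] lemma counitR_tmul (x y : H) :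
    B.toBgdCore.counitR (x ⊗ₜ[k] y) = βm (εm y) * x := by
  simp [BgdCore.counitR]

@[simp] lemma sandL_tmul (Dl : H →ₗ[k] H ⊗[k] H) (T : H →ₗ[k] H) (Cc : H ⊗[k] H) (x y : H) :
    sandL Dl T Cc (x ⊗ₜ[k] y) = Dl (T x) * Cc * (y ⊗ₜ[k] (1 : H)) := by
  simp [sandL]

@[simp] lemma sandR_tmul (Dl : H →ₗ[k] H ⊗[k] H) (T : H →ₗ[k] H) (Cc : H ⊗[k] H) (x y : H) :
    sandR Dl T Cc (x ⊗ₜ[k] y) = Dl (T y) * Cc * ((1 : H) ⊗ₜ[k] x) := by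
  simp [sandR]

@[simp] lemma trimapL_tmul (Dl : H →ₗ[k] H ⊗[k] H) (T : H →ₗ[k] H) (x y z : H) :
    trimapL Dl T ((x ⊗ₜ[k] y) ⊗ₜ[k] z) = Dl (T x) * (y ⊗ₜ[k] z) := by
  simp [trimapL]

@[simp] lemma trimapR_tmul (Dl : H →ₗ[k] H ⊗[k] H) (T : H →ₗ[k] H) (x y z : H) :
    trimapR Dl T ((x ⊗ₜ[k] y) ⊗ₜ[k] z) = Dl (T z) * (x ⊗ₜ[k] y) := by
  simp [trimapR]

/-- `Vof` as a linear map. -/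
noncomputable def VofL (T : H →ₗ[k] H) : H ⊗[k] H →ₗ[k] H :=
  LinearMap.mul' k H ∘ₗ TensorProduct.map T LinearMap.id

@[simp] lemma VofL_tmul (T : H →ₗ[k] H) (x y : H) : VofL T (x ⊗ₜ[k] y) = T x * y := by
  simp [VofL]

lemma Vof_eq (T : H →ₗ[k] H) (u : H ⊗[k] H) : Vof T u = VofL T u := rfl

@[simp] lemma SFmap_apply (T : H →ₗ[k] H) (a b h : H) :
    SFmap T a b h = a * (T h * b) := by
  simp [SFmap]

lemma ΔF_apply (C : DXCocycle B) (h : H) :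
    C.ΔF h = C.Fbar * (Δm h * C.F) := by
  simp [DXCocycle.ΔF]

lemma mem_iRF (C : DXCocycle B) {u : H ⊗[k] H} (hu : u ∈ J) : C.Fbar * u ∈ C.iRF :=
  ⟨u, hu, rfl⟩

lemma iRF_elim (C : DXCocycle B) {w : H ⊗[k] H} (hw : w ∈ C.iRF) :
    ∃ u ∈ J, w = C.Fbar * u := by
  obtain ⟨u, hu, rfl⟩ := hw; exact ⟨u, hu, rfl⟩

lemma iRF_mul_right (C : DXCocycle B) {w : H ⊗[k] H} (hw : w ∈ C.iRF) (v : H ⊗[k] H) :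
    w * v ∈ C.iRF := by
  obtain ⟨u, hu, rfl⟩ := hw
  have : (LinearMap.mulLeft k C.Fbar) u * v = C.Fbar * (u * v) := by
    simp [LinearMap.mulLeft_apply, mul_assoc]
  rw [this]
  exact mem_iRF C (iR_mul_right hu v)

/-! ### congruence utilities for `Δ` -/

lemma dmul2 (x y : H) : Δm (x * y) - Δm x * Δm y ∈ J := B.Δ_mul x y

lemma dmul_chain {x : H} {X : H ⊗[k] H} (h : Δm x - X ∈ J) (w : H) :
    Δm (w * x) - Δm w * X ∈ J := by
  have h1 := B.Δ_mul w x
  have h2 := Δ_mul_iR w h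
  have := Submodule.add_mem _ h1 h2
  convert this using 1
  rw [mul_sub]
  abel

lemma Δ_alpha (r : R) : Δm (αm r) - (αm r) ⊗ₜ[k] (1 : H) ∈ J := by
  have h := B.Δ_bimod r 1 1
  rw [B.toBgdCore.β_one, one_mul, mul_one] at h
  have h2 := alpha1_mul_iR (B := B) r B.Δ_one
  rw [mul_sub, mul_one] at h2
  have := Submodule.add_mem _ h h2
  convert this using 1
  abel

lemma Δ_beta (r : R) : Δm (βm r) - (1 : H) ⊗ₜ[k] (βm r) ∈ J := by
  have h := B.Δ_bimod 1 r 1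
  rw [map_one, one_mul, mul_one] at h
  have h2 := beta2_mul_iR (B := B) r B.Δ_one
  rw [mul_sub, mul_one] at h2
  have := Submodule.add_mem _ h h2
  convert this using 1
  abel

/-! ### the counit maps kill `iR` -/

lemma counitL_iR {u : H ⊗[k] H} (hu : u ∈ J) : B.toBgdCore.counitL u = 0 := by
  have := map_iR_le (B := B) B.toBgdCore.counitL ⊥ (fun r g g' => ?_) u hu
  · simpa using this
  · rw [map_sub]
    simp only [counitL_tmul, B.ε_rmul, map_mul, Submodule.mem_bot]
    rw [mul_assoc]
    abel

lemma counitR_iR {u : H ⊗[k] H} (hu : u ∈ J) : B.toBgdCore.counitR u = 0 := by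
  have := map_iR_le (B := B) B.toBgdCore.counitR ⊥ (fun r g g' => ?_) u hu
  · simpa using this
  · rw [map_sub]
    simp only [counitR_tmul, B.ε_lmul, B.toBgdCore.β_mul, Submodule.mem_bot]
    rw [mul_assoc]
    abel

lemma counitL_congr {u v : H ⊗[k] H} (h : u - v ∈ J) :
    B.toBgdCore.counitL u = B.toBgdCore.counitL v := by
  have := counitL_iR h
  rw [map_sub] at this
  exact sub_eq_zero.mp this

lemma counitR_congr {u v : H ⊗[k] H} (h : u - v ∈ J) :
    B.toBgdCore.counitR u = B.toBgdCore.counitR v := by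
  have := counitR_iR h
  rw [map_sub] at this
  exact sub_eq_zero.mp this


/-! ### `ε`-action lemmas -/

/-- `x ⊗ y ↦ α(ε(xw)) y`. -/
noncomputable def cLaux (B : LeftBialgebroid k R H) (w : H) : H ⊗[k] H →ₗ[k] H :=
  LinearMap.mul' k H ∘ₗ
    TensorProduct.map (B.toBgdCore.α.toLinearMap ∘ₗ B.toBgdCore.ε ∘ₗ LinearMap.mulRight k w)
      LinearMap.id

@[simp] lemma cLaux_tmul (w x y : H) : cLaux B w (x ⊗ₜ[k] y) = αm (εm (x * w)) * y := by
  simp [cLaux]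

/-- `x ⊗ y ↦ β(ε(yw)) x`. -/
noncomputable def cRaux (B : LeftBialgebroid k R H) (w : H) : H ⊗[k] H →ₗ[k] H :=
  LinearMap.mul' k H ∘ₗ
    TensorProduct.map (B.toBgdCore.β ∘ₗ B.toBgdCore.ε ∘ₗ LinearMap.mulRight k w)
      LinearMap.id ∘ₗ (TensorProduct.comm k H H).toLinearMap

@[simp] lemma cRaux_tmul (w x y : H) : cRaux B w (x ⊗ₜ[k] y) = βm (εm (y * w)) * x := by
  simp [cRaux]

lemma cLaux_weak (w : H) (u : H ⊗[k] H) : cLaux B w u = cLaux B (αm (εm w)) u := by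
  have h : cLaux B w = cLaux B (αm (εm w)) :=
    TensorProduct.ext' (fun x y => by rw [cLaux_tmul, cLaux_tmul, B.ε_weakmul x w])
  rw [h]

lemma cRaux_weak (w : H) (u : H ⊗[k] H) : cRaux B w u = cRaux B (βm (εm w)) u := by
  have h : cRaux B w = cRaux B (βm (εm w)) :=
    TensorProduct.ext' (fun x y => by
      rw [cRaux_tmul, cRaux_tmul, B.ε_weakmul y w, B.ε_weakmul y (βm (εm w)), B.εβ])
  rw [h]

lemma X1 (g w : H) : cLaux B w (Δm g) = g * αm (εm w) := by
  rw [cLaux_weak]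
  set s := εm w with hs
  have e1 : ∀ u, cLaux B (αm s) u = B.toBgdCore.counitL (u * (αm s ⊗ₜ[k] (1 : H))) := by
    intro u
    induction u using TensorProduct.induction_on with
    | zero => simp
    | tmul x y =>
        rw [Algebra.TensorProduct.tmul_mul_tmul x (αm s) y 1, counitL_tmul, cLaux_tmul, mul_one]
    | add x y hx hy => rw [map_add, add_mul, map_add, hx, hy]
  rw [e1]
  have hcong : Δm g * (αm s ⊗ₜ[k] (1 : H)) - Δm (g * αm s) ∈ J := by
    have h1 := dmul2 (B := B) g (αm s)
    have h2 := Δ_mul_iR (B := B) g (Δ_alpha (B := B) s)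
    rw [mul_sub] at h2
    have h3 := Submodule.neg_mem _ (Submodule.add_mem _ h1 h2)
    convert h3 using 1
    abel
  rw [counitL_congr hcong, B.counit_left]

lemma X2 (g w : H) : cRaux B w (Δm g) = g * βm (εm w) := by
  rw [cRaux_weak]
  set s := εm w with hs
  have e1 : ∀ u, cRaux B (βm s) u = B.toBgdCore.counitR (u * ((1 : H) ⊗ₜ[k] βm s)) := by
    intro u
    induction u using TensorProduct.induction_on with
    | zero => simp
    | tmul x y =>
        rw [Algebra.TensorProduct.tmul_mul_tmul x 1 y (βm s), counitR_tmul, cRaux_tmul, mul_one]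
    | add x y hx hy => rw [map_add, add_mul, map_add, hx, hy]
  rw [e1]
  have hcong : Δm g * ((1 : H) ⊗ₜ[k] βm s) - Δm (g * βm s) ∈ J := by
    have h1 := dmul2 (B := B) g (βm s)
    have h2 := Δ_mul_iR (B := B) g (Δ_beta (B := B) s)
    rw [mul_sub] at h2
    have h3 := Submodule.neg_mem _ (Submodule.add_mem _ h1 h2)
    convert h3 using 1
    abel
  rw [counitR_congr hcong, B.counit_right]


/-! ### antipode basics -/

variable {A : BSAntipode B}

lemma Si_one (A : BSAntipode B) : A.Sinv 1 = 1 := by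
  have h := A.Sinv_S 1
  rwa [A.S_one] at h

lemma Si_antimul (A : BSAntipode B) (x y : H) : A.Sinv (x * y) = A.Sinv y * A.Sinv x := by
  have h : A.S (A.Sinv y * A.Sinv x) = x * y := by
    rw [A.S_antimul, A.S_Sinv, A.S_Sinv]
  rw [← h, A.Sinv_S]

lemma VofL_iR_zero (A : BSAntipode B) {u : H ⊗[k] H} (hu : u ∈ J) : VofL A.S u = 0 := by
  have h := map_iR_le (B := B) (VofL A.S) ⊥ (fun r g g' => ?_) u hu
  · simpa using h
  · rw [map_sub]
    simp only [VofL_tmul, A.S_antimul, A.Sβ, Submodule.mem_bot]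
    rw [mul_assoc]
    abel

lemma VofL_congr (A : BSAntipode B) {u v : H ⊗[k] H} (h : u - v ∈ J) :
    VofL A.S u = VofL A.S v := by
  have h2 := VofL_iR_zero A h
  rw [map_sub] at h2
  exact sub_eq_zero.mp h2

lemma VofL_mul_r1 (T : H →ₗ[k] H) (hT : ∀ x y : H, T (x * y) = T y * T x)
    (u : H ⊗[k] H) (c : H) : VofL T (u * (c ⊗ₜ[k] (1 : H))) = T c * VofL T u := by
  induction u using TensorProduct.induction_on with
  | zero => simp
  | tmul x y =>
      rw [Algebra.TensorProduct.tmul_mul_tmul x c y 1, VofL_tmul, VofL_tmul, hT, mul_one,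
        mul_assoc]
  | add x y hx hy => rw [add_mul, map_add, hx, hy, map_add, mul_add]

lemma VofL_mul_l1 (T : H →ₗ[k] H) (u : H ⊗[k] H) (d : H) :
    VofL T (u * ((1 : H) ⊗ₜ[k] d)) = VofL T u * d := by
  induction u using TensorProduct.induction_on with
  | zero => simp
  | tmul x y =>
      rw [Algebra.TensorProduct.tmul_mul_tmul x 1 y d, VofL_tmul, VofL_tmul, mul_one,
        mul_assoc]
  | add x y hx hy => rw [add_mul, map_add, hx, hy, map_add, add_mul]

/-! ### the `κ` maps for the twisted Takeuchi property -/

section Part5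

variable (C : DXCocycle B) (t : R)

/-- `(x ⊗ y) ⊗ z ↦ x ⊗ α(ε(y α(t))) z` -/
noncomputable def kap (B : LeftBialgebroid k R H) (t : R) :
    (H ⊗[k] H) ⊗[k] H →ₗ[k] H ⊗[k] H :=
  LinearMap.mul' k (H ⊗[k] H) ∘ₗ
    TensorProduct.map
      (TensorProduct.map LinearMap.id
        (B.toBgdCore.α.toLinearMap ∘ₗ B.toBgdCore.ε ∘ₗ
          LinearMap.mulRight k (B.toBgdCore.α t)))
      (TensorProduct.mk k H H 1)

@[simp] lemma kap_tmul (x y z : H) :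
    kap B t ((x ⊗ₜ[k] y) ⊗ₜ[k] z) = x ⊗ₜ[k] (αm (εm (y * αm t)) * z) := by
  simp [kap, Algebra.TensorProduct.tmul_mul_tmul]

/-- `(x ⊗ y) ⊗ z ↦ (β(ε(y α(t))) x) ⊗ z` -/
noncomputable def kap' (B : LeftBialgebroid k R H) (t : R) :
    (H ⊗[k] H) ⊗[k] H →ₗ[k] H ⊗[k] H :=
  TensorProduct.map (cRaux B (B.toBgdCore.α t)) LinearMap.id

@[simp] lemma kap'_tmul (x y z : H) :
    kap' B t ((x ⊗ₜ[k] y) ⊗ₜ[k] z) = (βm (εm (y * αm t)) * x) ⊗ₜ[k] z := by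
  simp [kap']

lemma kap_iR3 {u : (H ⊗[k] H) ⊗[k] H} (hu : u ∈ J3) : kap B t u ∈ J := by
  refine map_iR3_le (B := B) (kap B t) J (fun r g g' g'' => ?_) (fun r g g' g'' => ?_) u hu
  · rw [map_sub, kap_tmul, kap_tmul]
    have h1 : αm r * g' * αm t = αm r * (g' * αm t) := by rw [mul_assoc]
    rw [h1, B.ε_lmul, map_mul B.toBgdCore.α, mul_assoc]
    exact gen_mem r g (αm (εm (g' * αm t)) * g'')
  · rw [map_sub, kap_tmul, kap_tmul]
    have h1 : βm r * g' * αm t = βm r * (g' * αm t) := by rw [mul_assoc]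
    rw [h1, B.ε_rmul, map_mul B.toBgdCore.α, mul_assoc]
    simp only [sub_self]
    exact Submodule.zero_mem J

lemma kap_kap'_cong (u : (H ⊗[k] H) ⊗[k] H) : kap B t u - kap' B t u ∈ J := by
  refine cong_tmul3 (kap B t) (kap' B t) J (fun x y z => ?_) u
  rw [kap_tmul, kap'_tmul]
  have h := Submodule.neg_mem _ (gen_mem (B := B) (εm (y * αm t)) x z)
  convert h using 1
  abel



lemma assoc_symm_mul (u v : H ⊗[k] (H ⊗[k] H)) :
    (TensorProduct.assoc k H H H).symm (u * v)
      = (TensorProduct.assoc k H H H).symm u * (TensorProduct.assoc k H H H).symm v := by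
  have h : ∀ w : H ⊗[k] (H ⊗[k] H), (TensorProduct.assoc k H H H).symm w
      = (Algebra.TensorProduct.assoc k k k H H H).symm w := fun w => rfl
  rw [h, h, h, map_mul]

lemma SL1 (x : H) (m : H ⊗[k] H) :
    kap B t ((TensorProduct.assoc k H H H).symm (x ⊗ₜ[k] m))
      = x ⊗ₜ[k] (cLaux B (αm t) m) := by
  induction m using TensorProduct.induction_on with
  | zero =>
      rw [TensorProduct.tmul_zero, LinearEquiv.map_zero, map_zero, map_zero,
        TensorProduct.tmul_zero]
  | tmul p q => rw [TensorProduct.assoc_symm_tmul, kap_tmul, cLaux_tmul]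
  | add m m' hm hm' => rw [TensorProduct.tmul_add, map_add, map_add, hm, hm', map_add,
      TensorProduct.tmul_add]

lemma SL2a (m : H ⊗[k] H) (a b : H) :
    cLaux B (αm t) (m * (a ⊗ₜ[k] b)) = cLaux B (a * αm t) m * b := by
  induction m using TensorProduct.induction_on with
  | zero => simp
  | tmul p q =>
      rw [Algebra.TensorProduct.tmul_mul_tmul p a q b, cLaux_tmul, cLaux_tmul, mul_assoc p,
        mul_assoc]
  | add m m' hm hm' => rw [add_mul, map_add, hm, hm', map_add, add_mul]

lemma SL2 (y : H) (v : H ⊗[k] H) :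
    cLaux B (αm t) (Δm y * v)
      = y * B.toBgdCore.counitL (v * (αm t ⊗ₜ[k] (1 : H))) := by
  induction v using TensorProduct.induction_on with
  | zero => simp
  | tmul a b =>
      rw [SL2a, X1, Algebra.TensorProduct.tmul_mul_tmul a (αm t) b 1, counitL_tmul, mul_one,
        mul_assoc]
  | add v v' hv hv' => rw [mul_add, map_add, hv, hv', add_mul, map_add, mul_add]

lemma SL3a (m : H ⊗[k] H) (a b : H) :
    cRaux B (αm t) (m * (a ⊗ₜ[k] b)) = cRaux B (b * αm t) m * a := by
  induction m using TensorProduct.induction_on with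
  | zero => simp
  | tmul p q =>
      rw [Algebra.TensorProduct.tmul_mul_tmul p a q b, cRaux_tmul, cRaux_tmul, mul_assoc q,
        mul_assoc]
  | add m m' hm hm' => rw [add_mul, map_add, hm, hm', map_add, add_mul]

lemma SL3 (x : H) (v : H ⊗[k] H) :
    cRaux B (αm t) (Δm x * v)
      = x * B.toBgdCore.counitR (v * ((1 : H) ⊗ₜ[k] αm t)) := by
  induction v using TensorProduct.induction_on with
  | zero => simp
  | tmul a b =>
      rw [SL3a, X2, Algebra.TensorProduct.tmul_mul_tmul a 1 b (αm t), counitR_tmul, mul_one,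
        mul_assoc]
  | add v v' hv hv' => rw [mul_add, map_add, hv, hv', add_mul, map_add, mul_add]

lemma kapR (u : H ⊗[k] H) :
    kap B t ((TensorProduct.assoc k H H H).symm ((TensorProduct.map LinearMap.id Δm) u)
        * (TensorProduct.assoc k H H H).symm ((1 : H) ⊗ₜ[k] C.F))
      = u * ((1 : H) ⊗ₜ[k] B.toBgdCore.counitL (C.F * (αm t ⊗ₜ[k] (1 : H)))) := by
  induction u using TensorProduct.induction_on with
  | zero => simp
  | tmul x y =>
      rw [TensorProduct.map_tmul, LinearMap.id_coe, id_eq, ← assoc_symm_mul,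
        Algebra.TensorProduct.tmul_mul_tmul x 1 (Δm y) C.F, mul_one, SL1, SL2]
      rw [Algebra.TensorProduct.tmul_mul_tmul x 1 y _, mul_one]
  | add u u' hu hu' => rw [map_add, map_add, add_mul, map_add, hu, hu', add_mul]

lemma kapL' (u : H ⊗[k] H) :
    kap' B t ((TensorProduct.map Δm LinearMap.id) u * (C.F ⊗ₜ[k] (1 : H)))
      = u * ((B.toBgdCore.counitR (C.F * ((1 : H) ⊗ₜ[k] αm t))) ⊗ₜ[k] (1 : H)) := by
  induction u using TensorProduct.induction_on with
  | zero => simp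
  | tmul x y =>
      rw [TensorProduct.map_tmul, LinearMap.id_coe, id_eq,
        Algebra.TensorProduct.tmul_mul_tmul (Δm x) C.F y 1, mul_one]
      have h : kap' B t ((Δm x * C.F) ⊗ₜ[k] y) = (cRaux B (αm t) (Δm x * C.F)) ⊗ₜ[k] y := by
        simp [kap']
      rw [h, SL3, Algebra.TensorProduct.tmul_mul_tmul x _ y 1, mul_one]
  | add u u' hu hu' => rw [map_add, add_mul, map_add, hu, hu', add_mul]

lemma key5 : C.F * ((C.betaF t) ⊗ₜ[k] (1 : H)) - C.F * ((1 : H) ⊗ₜ[k] (C.alphaF t)) ∈ J := by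
  have hc := C.cocycle
  have h2 : kap B t ((TensorProduct.map Δm LinearMap.id) C.F * (C.F ⊗ₜ[k] (1 : H)))
      - kap B t ((TensorProduct.assoc k H H H).symm ((TensorProduct.map LinearMap.id Δm) C.F)
        * (TensorProduct.assoc k H H H).symm ((1 : H) ⊗ₜ[k] C.F)) ∈ J := by
    rw [← map_sub]
    exact kap_iR3 t hc
  have h3 := kap_kap'_cong (B := B) t
    ((TensorProduct.map Δm LinearMap.id) C.F * (C.F ⊗ₜ[k] (1 : H)))
  rw [kapR] at h2
  rw [kapL'] at h3
  have h4 := Submodule.sub_mem _ h2 h3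
  convert h4 using 1
  rw [DXCocycle.betaF, DXCocycle.alphaF]
  abel

end Part5


/-! ### machinery for the twisted left antipode axiom -/

section Heavy

variable (A : BSAntipode B) (C : DXCocycle B)

/-- `x ⊗ y ↦ Δ(Tx)(y ⊗ c)`. -/
noncomputable def psiL (B : LeftBialgebroid k R H) (T : H →ₗ[k] H) (c : H) :
    H ⊗[k] H →ₗ[k] H ⊗[k] H :=
  LinearMap.mulRight k ((1 : H) ⊗ₜ[k] c) ∘ₗ sandL B.toBgdCore.Δ T 1

@[simp] lemma psiL_tmul (T : H →ₗ[k] H) (c x y : H) :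
    psiL B T c (x ⊗ₜ[k] y) = Δm (T x) * (y ⊗ₜ[k] c) := by
  simp only [psiL, LinearMap.coe_comp, Function.comp_apply, sandL_tmul,
    LinearMap.mulRight_apply, mul_one, mul_assoc, Algebra.TensorProduct.tmul_mul_tmul,
    one_mul]

/-- `x ⊗ y ↦ Δ(T x₍₁₎) (x₍₂₎ ⊗ y)` (summed). -/
noncomputable def map1L (B : LeftBialgebroid k R H) (T : H →ₗ[k] H) :
    H ⊗[k] H →ₗ[k] H ⊗[k] H :=
  trimapL B.toBgdCore.Δ T ∘ₗ TensorProduct.map B.toBgdCore.Δ LinearMap.id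

@[simp] lemma map1L_tmul (T : H →ₗ[k] H) (x y : H) :
    map1L B T (x ⊗ₜ[k] y) = trimapL Δm T (Δm x ⊗ₜ[k] y) := by
  simp [map1L]

lemma sandL_C_cong (T : H →ₗ[k] H) {C1 C2 : H ⊗[k] H} (h : C1 - C2 ∈ J) (u : H ⊗[k] H) :
    sandL Δm T C1 u - sandL Δm T C2 u ∈ J := by
  refine cong_tmul (sandL Δm T C1) (sandL Δm T C2) J (fun x y => ?_) u
  rw [sandL_tmul, sandL_tmul]
  have h1 := iR_mul_right (Δ_mul_iR (B := B) (T x) h) (y ⊗ₜ[k] (1 : H))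
  convert h1 using 1
  noncomm_ring

lemma trimapL_w (T : H →ₗ[k] H) (w : H ⊗[k] H) (y : H) :
    trimapL Δm T (w ⊗ₜ[k] y) = sandL Δm T 1 w * ((1 : H) ⊗ₜ[k] y) := by
  induction w using TensorProduct.induction_on with
  | zero => rw [TensorProduct.zero_tmul, map_zero, map_zero, zero_mul]
  | tmul p q =>
      rw [trimapL_tmul, sandL_tmul, mul_one, mul_assoc,
        Algebra.TensorProduct.tmul_mul_tmul, one_mul, mul_one]
  | add w w' hw hw' => rw [TensorProduct.add_tmul, map_add, map_add, hw, hw', add_mul]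

lemma L1 (u : H ⊗[k] H) :
    map1L B A.S u - (1 : H) ⊗ₜ[k] VofL A.S u ∈ J := by
  refine cong_tmul (map1L B A.S) ((TensorProduct.mk k H H 1) ∘ₗ VofL A.S) J (fun x y => ?_) u
  rw [map1L_tmul, trimapL_w]
  have h1 := iR_mul_right (A.left_axiom x) ((1 : H) ⊗ₜ[k] y)
  rw [sub_mul] at h1
  convert h1 using 1
  simp only [LinearMap.coe_comp, Function.comp_apply, VofL_tmul, TensorProduct.mk_apply,
    Algebra.TensorProduct.tmul_mul_tmul, one_mul]

lemma psiL_iR {c : H} {u : H ⊗[k] H} (hu : u ∈ J) : psiL B A.S c u ∈ J := by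
  refine map_iR_le (B := B) (psiL B A.S c) J (fun r g g' => ?_) u hu
  rw [map_sub, psiL_tmul, psiL_tmul, A.S_antimul, A.Sβ]
  have e : (αm r * g') ⊗ₜ[k] c = (αm r ⊗ₜ[k] (1 : H)) * (g' ⊗ₜ[k] c) := by
    rw [Algebra.TensorProduct.tmul_mul_tmul, one_mul]
  rw [e]
  have h1 := iR_mul_right (dmul_chain (B := B) (Δ_alpha (B := B) r) (A.S g)) (g' ⊗ₜ[k] c)
  convert h1 using 1
  noncomm_ring

lemma RL (c : H) (v u : H ⊗[k] H) :
    sandL Δm A.S (psiL B A.S c v) u - psiL B A.S c (v * u) ∈ J := by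
  refine cong_tmul (sandL Δm A.S (psiL B A.S c v))
    ((psiL B A.S c) ∘ₗ LinearMap.mulLeft k v) J (fun g g' => ?_) u
  simp only [LinearMap.coe_comp, Function.comp_apply, LinearMap.mulLeft_apply, sandL_tmul]
  induction v using TensorProduct.induction_on with
  | zero => simp
  | tmul p q =>
      rw [psiL_tmul, Algebra.TensorProduct.tmul_mul_tmul, psiL_tmul, A.S_antimul]
      have e : (q * g') ⊗ₜ[k] c = (q ⊗ₜ[k] c) * (g' ⊗ₜ[k] (1 : H)) := by
        rw [Algebra.TensorProduct.tmul_mul_tmul, mul_one]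
      rw [e]
      have h1 := iR_mul_right (Submodule.neg_mem _ (dmul2 (B := B) (A.S g) (A.S p)))
        ((q ⊗ₜ[k] c) * (g' ⊗ₜ[k] (1 : H)))
      convert h1 using 1
      noncomm_ring
  | add v v' hv hv' =>
      rw [add_mul, map_add, map_add]
      have h2 := Submodule.add_mem _ hv hv'
      convert h2 using 1
      noncomm_ring

lemma IL0 (T : H →ₗ[k] H) (x : H) (m : H ⊗[k] H) :
    trimapL Δm T ((TensorProduct.assoc k H H H).symm (x ⊗ₜ[k] m)) = Δm (T x) * m := by
  induction m using TensorProduct.induction_on with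
  | zero =>
      rw [TensorProduct.tmul_zero, LinearEquiv.map_zero, map_zero, mul_zero]
  | tmul p q => rw [TensorProduct.assoc_symm_tmul, trimapL_tmul]
  | add m m' hm hm' =>
      rw [TensorProduct.tmul_add, LinearEquiv.map_add, map_add, hm, hm', mul_add]

lemma EVR (T : H →ₗ[k] H) (v u : H ⊗[k] H) :
    trimapL Δm T ((TensorProduct.assoc k H H H).symm ((TensorProduct.map LinearMap.id Δm) u)
        * (TensorProduct.assoc k H H H).symm ((1 : H) ⊗ₜ[k] v))
      = LinearMap.mul' k (H ⊗[k] H)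
          ((TensorProduct.map (Δm ∘ₗ T) (LinearMap.mulRight k v ∘ₗ Δm)) u) := by
  induction u using TensorProduct.induction_on with
  | zero => simp
  | tmul x y =>
      rw [TensorProduct.map_tmul, LinearMap.id_coe, id_eq, ← assoc_symm_mul,
        Algebra.TensorProduct.tmul_mul_tmul x 1 (Δm y) v, mul_one, IL0, TensorProduct.map_tmul]
      simp only [LinearMap.coe_comp, Function.comp_apply, LinearMap.mulRight_apply,
        LinearMap.mul'_apply]
  | add u u' hu hu' =>
      rw [map_add, LinearEquiv.map_add, add_mul, map_add, hu, hu', map_add, map_add]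

lemma PhiP_iR3 {u : (H ⊗[k] H) ⊗[k] H} (hu : u ∈ J3) : trimapL Δm A.S u ∈ J := by
  refine map_iR3_le (B := B) (trimapL Δm A.S) J (fun r g g' g'' => ?_) (fun r g g' g'' => ?_)
    u hu
  · rw [map_sub, trimapL_tmul, trimapL_tmul, A.S_antimul, A.Sβ]
    have h1 := iR_mul_right (dmul_chain (B := B) (Δ_alpha (B := B) r) (A.S g)) (g' ⊗ₜ[k] g'')
    rw [sub_mul] at h1
    convert h1 using 2
    rw [mul_assoc, Algebra.TensorProduct.tmul_mul_tmul, one_mul]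
  · rw [map_sub, trimapL_tmul, trimapL_tmul, ← mul_sub]
    exact Δ_mul_iR (B := B) (A.S g) (gen_mem (B := B) r g' g'')

lemma W1 (w : H ⊗[k] H) (y a b : H) :
    trimapL Δm A.S ((w * (a ⊗ₜ[k] b)) ⊗ₜ[k] y)
      - Δm (A.S a) * (trimapL Δm A.S (w ⊗ₜ[k] y)) * (b ⊗ₜ[k] (1 : H)) ∈ J := by
  induction w using TensorProduct.induction_on with
  | zero => simp
  | tmul p q =>
      rw [Algebra.TensorProduct.tmul_mul_tmul, trimapL_tmul, trimapL_tmul, A.S_antimul]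
      have e : (q * b) ⊗ₜ[k] y = (q ⊗ₜ[k] y) * (b ⊗ₜ[k] (1 : H)) := by
        rw [Algebra.TensorProduct.tmul_mul_tmul, mul_one]
      rw [e]
      have h1 := iR_mul_right (dmul2 (B := B) (A.S a) (A.S p))
        ((q ⊗ₜ[k] y) * (b ⊗ₜ[k] (1 : H)))
      convert h1 using 1
      noncomm_ring
  | add w w' hw hw' =>
      rw [add_mul, TensorProduct.add_tmul, TensorProduct.add_tmul, map_add, map_add]
      have h2 := Submodule.add_mem _ hw hw'
      convert h2 using 1
      noncomm_ring

lemma EVL (v u : H ⊗[k] H) :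
    trimapL Δm A.S ((TensorProduct.map Δm LinearMap.id u) * (v ⊗ₜ[k] (1 : H)))
      - sandL Δm A.S (map1L B A.S u) v ∈ J := by
  refine cong_tmul (trimapL Δm A.S ∘ₗ LinearMap.mulLeft k (TensorProduct.map Δm LinearMap.id u)
      ∘ₗ (TensorProduct.mk k (H ⊗[k] H) H).flip 1)
    (sandL Δm A.S (map1L B A.S u)) J (fun a b => ?_) v
  simp only [LinearMap.coe_comp, Function.comp_apply, LinearMap.flip_apply,
    TensorProduct.mk_apply, LinearMap.mulLeft_apply, sandL_tmul]
  induction u using TensorProduct.induction_on with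
  | zero => simp
  | tmul x y =>
      rw [TensorProduct.map_tmul, LinearMap.id_coe, id_eq,
        Algebra.TensorProduct.tmul_mul_tmul (Δm x) (a ⊗ₜ[k] b) y 1, mul_one, map1L_tmul]
      exact W1 A (Δm x) y a b
  | add u u' hu hu' =>
      rw [map_add, add_mul, map_add, map_add]
      have h2 := Submodule.add_mem _ hu hu'
      convert h2 using 1
      noncomm_ring


lemma psiL_def_apply (T : H →ₗ[k] H) (c : H) (z : H ⊗[k] H) :
    psiL B T c z = sandL Δm T 1 z * ((1 : H) ⊗ₜ[k] c) := rfl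

lemma sandL_one_c (T : H →ₗ[k] H) (c : H) (z : H ⊗[k] H) :
    sandL Δm T ((1 : H) ⊗ₜ[k] c) z = psiL B T c z := by
  induction z using TensorProduct.induction_on with
  | zero => simp
  | tmul x y =>
      rw [sandL_tmul, psiL_tmul, mul_assoc, Algebra.TensorProduct.tmul_mul_tmul, one_mul,
        mul_one]
  | add z z' hz hz' => rw [map_add, map_add, hz, hz']

/-- `x ⊗ y ↦ Δ(Tx) Δ(y)`. -/
noncomputable def map2L (B : LeftBialgebroid k R H) (T : H →ₗ[k] H) :
    H ⊗[k] H →ₗ[k] H ⊗[k] H :=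
  LinearMap.mul' k (H ⊗[k] H) ∘ₗ TensorProduct.map (B.toBgdCore.Δ ∘ₗ T) B.toBgdCore.Δ

@[simp] lemma map2L_tmul (T : H →ₗ[k] H) (x y : H) :
    map2L B T (x ⊗ₜ[k] y) = Δm (T x) * Δm y := by
  simp [map2L]

lemma dmulV (u : H ⊗[k] H) : Δm (VofL A.S u) - map2L B A.S u ∈ J := by
  refine cong_tmul (Δm ∘ₗ VofL A.S) (map2L B A.S) J (fun x y => ?_) u
  simp only [LinearMap.coe_comp, Function.comp_apply, VofL_tmul, map2L_tmul]
  exact dmul2 (B := B) (A.S x) y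

lemma map2_mulF (T : H →ₗ[k] H) (u v : H ⊗[k] H) :
    map2L B T u * v
      = LinearMap.mul' k (H ⊗[k] H)
          ((TensorProduct.map (Δm ∘ₗ T) (LinearMap.mulRight k v ∘ₗ Δm)) u) := by
  induction u using TensorProduct.induction_on with
  | zero => simp
  | tmul x y =>
      rw [map2L_tmul, TensorProduct.map_tmul]
      simp only [LinearMap.coe_comp, Function.comp_apply, LinearMap.mulRight_apply,
        LinearMap.mul'_apply, mul_assoc]
  | add u u' hu hu' => rw [map_add, add_mul, map_add, map_add, hu, hu']

lemma EL : Δm (VofL A.S C.F) * C.F - psiL B A.S (VofL A.S C.F) C.F ∈ J := by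
  have a1 : Δm (VofL A.S C.F) * C.F - map2L B A.S C.F * C.F ∈ J := by
    have h := iR_mul_right (dmulV A C.F) C.F
    convert h using 1
    noncomm_ring
  have a2 : map2L B A.S C.F * C.F
      = trimapL Δm A.S
          ((TensorProduct.assoc k H H H).symm ((TensorProduct.map LinearMap.id Δm) C.F)
            * (TensorProduct.assoc k H H H).symm ((1 : H) ⊗ₜ[k] C.F)) := by
    rw [map2_mulF, EVR]
  have a3 : trimapL Δm A.S ((TensorProduct.map Δm LinearMap.id) C.F * (C.F ⊗ₜ[k] (1 : H)))
      - trimapL Δm A.S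
          ((TensorProduct.assoc k H H H).symm ((TensorProduct.map LinearMap.id Δm) C.F)
            * (TensorProduct.assoc k H H H).symm ((1 : H) ⊗ₜ[k] C.F)) ∈ J := by
    rw [← map_sub]
    exact PhiP_iR3 A C.cocycle
  have a4 := EVL A C.F C.F
  have a5 := sandL_C_cong A.S (L1 A C.F) C.F
  have a6 : sandL Δm A.S ((1 : H) ⊗ₜ[k] VofL A.S C.F) C.F
      = psiL B A.S (VofL A.S C.F) C.F := sandL_one_c A.S _ C.F
  have total := Submodule.add_mem _
    (Submodule.add_mem _ (Submodule.add_mem _ a1 (Submodule.neg_mem _ a3)) a4) a5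
  convert total using 1
  rw [a2, a6]
  abel

lemma LA2 : sandL Δm A.S (Δm (VofL A.S C.F) * C.F) C.Fbar
    - (1 : H) ⊗ₜ[k] (VofL A.S C.F) ∈ J := by
  have b1 := sandL_C_cong A.S (EL A C) C.Fbar
  have b2 := RL A (VofL A.S C.F) C.F C.Fbar
  have b3 : psiL B A.S (VofL A.S C.F) (C.F * C.Fbar)
      - psiL B A.S (VofL A.S C.F) 1 ∈ J := by
    have h := psiL_iR (B := B) A (c := VofL A.S C.F) C.inv_right
    rwa [map_sub] at h
  have b4 : psiL B A.S (VofL A.S C.F) 1 - (1 : H) ⊗ₜ[k] (VofL A.S C.F) ∈ J := by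
    have e : psiL B A.S (VofL A.S C.F) 1
        = Δm (1 : H) * ((1 : H) ⊗ₜ[k] (VofL A.S C.F)) := by
      rw [Algebra.TensorProduct.one_def, psiL_tmul, A.S_one]
    have h := iR_mul_right B.Δ_one ((1 : H) ⊗ₜ[k] (VofL A.S C.F))
    rw [e]
    convert h using 1
    noncomm_ring
  have total := Submodule.add_mem _
    (Submodule.add_mem _ (Submodule.add_mem _ b1 b2) b3) b4
  convert total using 1
  abel

lemma LA1 (Vinv : H) (u m w : H ⊗[k] H) :
    sandL C.ΔF (SFmap A.S Vinv (Vof A.S C.F)) 1 (u * (m * w))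
      - C.Fbar * (Δm Vinv
          * sandL Δm A.S
              (sandL Δm A.S (sandL Δm A.S (Δm (Vof A.S C.F) * C.F) u) m) w) ∈ C.iRF := by
  refine cong_tmul
    (sandL C.ΔF (SFmap A.S Vinv (Vof A.S C.F)) 1 ∘ₗ LinearMap.mulLeft k u
        ∘ₗ LinearMap.mulLeft k m)
    (LinearMap.mulLeft k C.Fbar ∘ₗ LinearMap.mulLeft k (Δm Vinv)
        ∘ₗ sandL Δm A.S (sandL Δm A.S (sandL Δm A.S (Δm (Vof A.S C.F) * C.F) u) m))
    C.iRF (fun e f => ?_) w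
  simp only [LinearMap.coe_comp, Function.comp_apply, LinearMap.mulLeft_apply, sandL_tmul]
  refine cong_tmul
    (sandL C.ΔF (SFmap A.S Vinv (Vof A.S C.F)) 1 ∘ₗ LinearMap.mulLeft k u
        ∘ₗ LinearMap.mulRight k (e ⊗ₜ[k] f))
    (LinearMap.mulLeft k C.Fbar ∘ₗ LinearMap.mulLeft k (Δm Vinv)
        ∘ₗ LinearMap.mulRight k (f ⊗ₜ[k] (1 : H)) ∘ₗ LinearMap.mulLeft k (Δm (A.S e))
        ∘ₗ sandL Δm A.S (sandL Δm A.S (Δm (Vof A.S C.F) * C.F) u))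
    C.iRF (fun c d => ?_) m
  simp only [LinearMap.coe_comp, Function.comp_apply, LinearMap.mulLeft_apply,
    LinearMap.mulRight_apply, sandL_tmul]
  refine cong_tmul
    (sandL C.ΔF (SFmap A.S Vinv (Vof A.S C.F)) 1
        ∘ₗ LinearMap.mulRight k ((c ⊗ₜ[k] d) * (e ⊗ₜ[k] f)))
    (LinearMap.mulLeft k C.Fbar ∘ₗ LinearMap.mulLeft k (Δm Vinv)
        ∘ₗ LinearMap.mulRight k (f ⊗ₜ[k] (1 : H)) ∘ₗ LinearMap.mulLeft k (Δm (A.S e))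
        ∘ₗ LinearMap.mulRight k (d ⊗ₜ[k] (1 : H)) ∘ₗ LinearMap.mulLeft k (Δm (A.S c))
        ∘ₗ sandL Δm A.S (Δm (Vof A.S C.F) * C.F))
    C.iRF (fun a b => ?_) u
  simp only [LinearMap.coe_comp, Function.comp_apply, LinearMap.mulLeft_apply,
    LinearMap.mulRight_apply, sandL_tmul, Algebra.TensorProduct.tmul_mul_tmul, SFmap_apply,
    ΔF_apply, A.S_antimul, mul_one, mul_assoc]
  have h0 := dmul2 (B := B) (A.S a) (Vof A.S C.F)
  have h1 := dmul_chain (B := B) h0 (A.S c)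
  have h2 := dmul_chain (B := B) h1 (A.S e)
  have h3 := dmul_chain (B := B) h2 Vinv
  have etm : (b * (d * f)) ⊗ₜ[k] (1 : H)
      = (b ⊗ₜ[k] (1 : H)) * ((d ⊗ₜ[k] (1 : H)) * (f ⊗ₜ[k] (1 : H))) := by
    simp [Algebra.TensorProduct.tmul_mul_tmul]
  rw [etm]
  have hmem := mem_iRF C (iR_mul_right h3
    (C.F * ((b ⊗ₜ[k] (1 : H)) * ((d ⊗ₜ[k] (1 : H)) * (f ⊗ₜ[k] (1 : H))))))
  convert hmem using 1
  noncomm_ring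


lemma sandL_one_Vinv {Vinv : H} (hV1' : VofL A.S C.F * Vinv = 1) (u : H ⊗[k] H) :
    sandL Δm A.S 1 u = psiL B A.S (VofL A.S C.F) u * ((1 : H) ⊗ₜ[k] Vinv) := by
  induction u using TensorProduct.induction_on with
  | zero => simp
  | tmul x y =>
      rw [sandL_tmul, psiL_tmul, mul_one, mul_assoc, Algebra.TensorProduct.tmul_mul_tmul,
        hV1', mul_one]
  | add u u' hu hu' => rw [map_add, map_add, hu, hu', add_mul]

lemma leftAxiom {Vinv : H} (hV1 : Vof A.S C.F * Vinv = 1) (hV2 : Vinv * Vof A.S C.F = 1)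
    (h : H) :
    sandL C.ΔF (SFmap A.S Vinv (Vof A.S C.F)) 1 (C.ΔF h)
      - (1 : H) ⊗ₜ[k] SFmap A.S Vinv (Vof A.S C.F) h ∈ C.iRF := by
  have hV1' : VofL A.S C.F * Vinv = 1 := hV1
  have hV2' : Vinv * VofL A.S C.F = 1 := hV2
  -- step 1 : expansion
  have s1 : sandL C.ΔF (SFmap A.S Vinv (Vof A.S C.F)) 1 (C.ΔF h)
      - C.Fbar * (Δm Vinv
          * sandL Δm A.S
              (sandL Δm A.S (sandL Δm A.S (Δm (Vof A.S C.F) * C.F) C.Fbar) (Δm h)) C.F)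
        ∈ C.iRF := by
    have := LA1 A C Vinv C.Fbar (Δm h) C.F
    rwa [← ΔF_apply] at this
  -- inner E-simplification
  have s2 : sandL Δm A.S (Δm (Vof A.S C.F) * C.F) C.Fbar
      - (1 : H) ⊗ₜ[k] (VofL A.S C.F) ∈ J := by
    rw [Vof_eq]
    exact LA2 A C
  -- middle simplification
  have s3 : sandL Δm A.S (sandL Δm A.S (Δm (Vof A.S C.F) * C.F) C.Fbar) (Δm h)
      - (1 : H) ⊗ₜ[k] (A.S h * VofL A.S C.F) ∈ J := by
    have c1 := sandL_C_cong A.S s2 (Δm h)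
    have c2 : sandL Δm A.S ((1 : H) ⊗ₜ[k] (VofL A.S C.F)) (Δm h)
        = sandL Δm A.S 1 (Δm h) * ((1 : H) ⊗ₜ[k] VofL A.S C.F) := by
      rw [sandL_one_c, psiL_def_apply]
    have c3 := iR_mul_right (A.left_axiom h) ((1 : H) ⊗ₜ[k] (VofL A.S C.F))
    have etm : ((1 : H) ⊗ₜ[k] (A.S h)) * ((1 : H) ⊗ₜ[k] (VofL A.S C.F))
        = (1 : H) ⊗ₜ[k] (A.S h * VofL A.S C.F) := by
      rw [Algebra.TensorProduct.tmul_mul_tmul, one_mul]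
    have total := Submodule.add_mem _ c1 c3
    convert total using 1
    rw [c2, ← etm]
    noncomm_ring
  -- outer substitution
  have c4 := sandL_C_cong A.S s3 C.F
  have s5 : sandL Δm A.S ((1 : H) ⊗ₜ[k] (A.S h * VofL A.S C.F)) C.F
      = sandL Δm A.S 1 C.F * ((1 : H) ⊗ₜ[k] (A.S h * VofL A.S C.F)) := by
    rw [sandL_one_c, psiL_def_apply]
  have s6 := sandL_one_Vinv A C hV1' C.F
  have s8 : Δm Vinv * Δm (VofL A.S C.F) - 1 ∈ J := by
    have d1 := dmul2 (B := B) Vinv (VofL A.S C.F)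
    rw [hV2'] at d1
    have d2 := Submodule.sub_mem _ B.Δ_one d1
    convert d2 using 1
    abel
  -- assemble
  have c12 : C.Fbar * (Δm Vinv
        * sandL Δm A.S
            (sandL Δm A.S (sandL Δm A.S (Δm (Vof A.S C.F) * C.F) C.Fbar) (Δm h)) C.F)
      - C.Fbar * (Δm Vinv * (sandL Δm A.S 1 C.F
            * ((1 : H) ⊗ₜ[k] (A.S h * VofL A.S C.F)))) ∈ C.iRF := by
    have j := mem_iRF C (Δ_mul_iR (B := B) Vinv c4)
    convert j using 1
    rw [← s5]
    noncomm_ring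
  have c24 : C.Fbar * (Δm Vinv * (sandL Δm A.S 1 C.F
          * ((1 : H) ⊗ₜ[k] (A.S h * VofL A.S C.F))))
      - C.Fbar * (Δm Vinv * ((Δm (VofL A.S C.F) * C.F)
          * (((1 : H) ⊗ₜ[k] Vinv) * ((1 : H) ⊗ₜ[k] (A.S h * VofL A.S C.F))))) ∈ C.iRF := by
    have j := mem_iRF C (Δ_mul_iR (B := B) Vinv
      (iR_mul_right (Submodule.neg_mem _ (EL A C))
        (((1 : H) ⊗ₜ[k] Vinv) * ((1 : H) ⊗ₜ[k] (A.S h * VofL A.S C.F)))))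
    convert j using 1
    rw [s6]
    noncomm_ring
  have c45 : C.Fbar * (Δm Vinv * ((Δm (VofL A.S C.F) * C.F)
          * (((1 : H) ⊗ₜ[k] Vinv) * ((1 : H) ⊗ₜ[k] (A.S h * VofL A.S C.F)))))
      - C.Fbar * (C.F
          * (((1 : H) ⊗ₜ[k] Vinv) * ((1 : H) ⊗ₜ[k] (A.S h * VofL A.S C.F)))) ∈ C.iRF := by
    have j := mem_iRF C (iR_mul_right s8
      (C.F * (((1 : H) ⊗ₜ[k] Vinv) * ((1 : H) ⊗ₜ[k] (A.S h * VofL A.S C.F)))))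
    convert j using 1
    noncomm_ring
  have c56 : C.Fbar * (C.F
          * (((1 : H) ⊗ₜ[k] Vinv) * ((1 : H) ⊗ₜ[k] (A.S h * VofL A.S C.F))))
      - (1 : H) ⊗ₜ[k] SFmap A.S Vinv (Vof A.S C.F) h ∈ C.iRF := by
    have j := iRF_mul_right C C.inv_left
      (((1 : H) ⊗ₜ[k] Vinv) * ((1 : H) ⊗ₜ[k] (A.S h * VofL A.S C.F)))
    have etm : ((1 : H) ⊗ₜ[k] Vinv) * ((1 : H) ⊗ₜ[k] (A.S h * VofL A.S C.F))
        = (1 : H) ⊗ₜ[k] (Vinv * (A.S h * VofL A.S C.F)) := by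
      rw [Algebra.TensorProduct.tmul_mul_tmul, one_mul]
    convert j using 1
    rw [SFmap_apply, Vof_eq, ← etm]
    noncomm_ring
  have total := Submodule.add_mem _ (Submodule.add_mem _
    (Submodule.add_mem _ (Submodule.add_mem _ s1 c12) c24) c45) c56
  convert total using 1
  abel


/-! ### mirror machinery for the twisted right antipode axiom -/

/-- `Vof` for the inverse antipode: `x ⊗ y ↦ T(y) x`. -/
noncomputable def VofR (T : H →ₗ[k] H) : H ⊗[k] H →ₗ[k] H :=
  LinearMap.mul' k H ∘ₗ TensorProduct.map T LinearMap.id ∘ₗ (TensorProduct.comm k H H).toLinearMap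

@[simp] lemma VofR_tmul (T : H →ₗ[k] H) (x y : H) : VofR T (x ⊗ₜ[k] y) = T y * x := by
  simp [VofR]

lemma Si_Vof (u : H ⊗[k] H) : A.Sinv (VofL A.S u) = VofR A.Sinv u := by
  induction u using TensorProduct.induction_on with
  | zero => simp
  | tmul x y => rw [VofL_tmul, VofR_tmul, Si_antimul A, A.Sinv_S]
  | add u u' hu hu' => rw [map_add, map_add, map_add, hu, hu']

/-- mirror of `psiL`: `x ⊗ y ↦ Δ(Ty)(c ⊗ x)`. -/
noncomputable def psiR (B : LeftBialgebroid k R H) (T : H →ₗ[k] H) (c : H) :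
    H ⊗[k] H →ₗ[k] H ⊗[k] H :=
  LinearMap.mulRight k (c ⊗ₜ[k] (1 : H)) ∘ₗ sandR B.toBgdCore.Δ T 1

@[simp] lemma psiR_tmul (T : H →ₗ[k] H) (c x y : H) :
    psiR B T c (x ⊗ₜ[k] y) = Δm (T y) * (c ⊗ₜ[k] x) := by
  simp only [psiR, LinearMap.coe_comp, Function.comp_apply, sandR_tmul,
    LinearMap.mulRight_apply, mul_one, mul_assoc, Algebra.TensorProduct.tmul_mul_tmul,
    one_mul]

lemma psiR_def_apply (T : H →ₗ[k] H) (c : H) (z : H ⊗[k] H) :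
    psiR B T c z = sandR Δm T 1 z * (c ⊗ₜ[k] (1 : H)) := rfl

lemma sandR_one_c (T : H →ₗ[k] H) (c : H) (z : H ⊗[k] H) :
    sandR Δm T (c ⊗ₜ[k] (1 : H)) z = psiR B T c z := by
  induction z using TensorProduct.induction_on with
  | zero => simp
  | tmul x y =>
      rw [sandR_tmul, psiR_tmul, mul_assoc, Algebra.TensorProduct.tmul_mul_tmul, one_mul,
        mul_one]
  | add z z' hz hz' => rw [map_add, map_add, hz, hz']

/-- mirror of `map1L`. -/
noncomputable def map1R (B : LeftBialgebroid k R H) (T : H →ₗ[k] H) :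
    H ⊗[k] H →ₗ[k] H ⊗[k] H :=
  trimapR B.toBgdCore.Δ T ∘ₗ (TensorProduct.assoc k H H H).symm.toLinearMap
    ∘ₗ TensorProduct.map LinearMap.id B.toBgdCore.Δ

@[simp] lemma map1R_tmul (T : H →ₗ[k] H) (x y : H) :
    map1R B T (x ⊗ₜ[k] y)
      = trimapR Δm T ((TensorProduct.assoc k H H H).symm (x ⊗ₜ[k] Δm y)) := by
  simp [map1R]

lemma sandR_C_cong (T : H →ₗ[k] H) {C1 C2 : H ⊗[k] H} (h : C1 - C2 ∈ J) (u : H ⊗[k] H) :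
    sandR Δm T C1 u - sandR Δm T C2 u ∈ J := by
  refine cong_tmul (sandR Δm T C1) (sandR Δm T C2) J (fun x y => ?_) u
  rw [sandR_tmul, sandR_tmul]
  have h1 := iR_mul_right (Δ_mul_iR (B := B) (T y) h) ((1 : H) ⊗ₜ[k] x)
  convert h1 using 1
  noncomm_ring

lemma trimapR_w (T : H →ₗ[k] H) (x : H) (w : H ⊗[k] H) :
    trimapR Δm T ((TensorProduct.assoc k H H H).symm (x ⊗ₜ[k] w))
      = sandR Δm T 1 w * (x ⊗ₜ[k] (1 : H)) := by
  induction w using TensorProduct.induction_on with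
  | zero => rw [TensorProduct.tmul_zero, LinearEquiv.map_zero, map_zero, map_zero, zero_mul]
  | tmul p q =>
      rw [TensorProduct.assoc_symm_tmul, trimapR_tmul, sandR_tmul, mul_one, mul_assoc,
        Algebra.TensorProduct.tmul_mul_tmul, one_mul, mul_one]
  | add w w' hw hw' =>
      rw [TensorProduct.tmul_add, LinearEquiv.map_add, map_add, map_add, hw, hw', add_mul]

lemma L1R (u : H ⊗[k] H) :
    map1R B A.Sinv u - (VofR A.Sinv u) ⊗ₜ[k] (1 : H) ∈ J := by
  refine cong_tmul (map1R B A.Sinv)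
    (((TensorProduct.mk k H H).flip 1) ∘ₗ VofR A.Sinv) J (fun x y => ?_) u
  rw [map1R_tmul, trimapR_w]
  have h1 := iR_mul_right (A.right_axiom y) (x ⊗ₜ[k] (1 : H))
  convert h1 using 1
  simp only [LinearMap.coe_comp, Function.comp_apply, VofR_tmul, LinearMap.flip_apply,
    TensorProduct.mk_apply]
  rw [sub_mul, Algebra.TensorProduct.tmul_mul_tmul, mul_one]

lemma psiR_iR {c : H} {u : H ⊗[k] H} (hu : u ∈ J) : psiR B A.Sinv c u ∈ J := by
  refine map_iR_le (B := B) (psiR B A.Sinv c) J (fun r g g' => ?_) u hu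
  rw [map_sub, psiR_tmul, psiR_tmul, Si_antimul A, A.Sinvα]
  have e : c ⊗ₜ[k] (βm r * g) = ((1 : H) ⊗ₜ[k] βm r) * (c ⊗ₜ[k] g) := by
    rw [Algebra.TensorProduct.tmul_mul_tmul, one_mul]
  rw [e]
  have h1 := iR_mul_right
    (Submodule.neg_mem _ (dmul_chain (B := B) (Δ_beta (B := B) r) (A.Sinv g'))) (c ⊗ₜ[k] g)
  convert h1 using 1
  noncomm_ring

lemma RLR (c : H) (v u : H ⊗[k] H) :
    sandR Δm A.Sinv (psiR B A.Sinv c v) u - psiR B A.Sinv c (v * u) ∈ J := by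
  refine cong_tmul (sandR Δm A.Sinv (psiR B A.Sinv c v))
    ((psiR B A.Sinv c) ∘ₗ LinearMap.mulLeft k v) J (fun g g' => ?_) u
  simp only [LinearMap.coe_comp, Function.comp_apply, LinearMap.mulLeft_apply, sandR_tmul]
  induction v using TensorProduct.induction_on with
  | zero => simp
  | tmul p q =>
      rw [psiR_tmul, Algebra.TensorProduct.tmul_mul_tmul, psiR_tmul, Si_antimul A]
      have e : c ⊗ₜ[k] (p * g) = (c ⊗ₜ[k] p) * ((1 : H) ⊗ₜ[k] g) := by
        rw [Algebra.TensorProduct.tmul_mul_tmul, mul_one]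
      rw [e]
      have h1 := iR_mul_right (Submodule.neg_mem _ (dmul2 (B := B) (A.Sinv g') (A.Sinv q)))
        ((c ⊗ₜ[k] p) * ((1 : H) ⊗ₜ[k] g))
      convert h1 using 1
      noncomm_ring
  | add v v' hv hv' =>
      rw [add_mul, map_add, map_add]
      have h2 := Submodule.add_mem _ hv hv'
      convert h2 using 1
      noncomm_ring

/-- mirror of `map2L`. -/
noncomputable def map2R (B : LeftBialgebroid k R H) (T : H →ₗ[k] H) :
    H ⊗[k] H →ₗ[k] H ⊗[k] H :=
  LinearMap.mul' k (H ⊗[k] H) ∘ₗ TensorProduct.map (B.toBgdCore.Δ ∘ₗ T) B.toBgdCore.Δ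
    ∘ₗ (TensorProduct.comm k H H).toLinearMap

@[simp] lemma map2R_tmul (T : H →ₗ[k] H) (x y : H) :
    map2R B T (x ⊗ₜ[k] y) = Δm (T y) * Δm x := by
  simp [map2R]

lemma dmulW (u : H ⊗[k] H) : Δm (VofR A.Sinv u) - map2R B A.Sinv u ∈ J := by
  refine cong_tmul (Δm ∘ₗ VofR A.Sinv) (map2R B A.Sinv) J (fun x y => ?_) u
  simp only [LinearMap.coe_comp, Function.comp_apply, VofR_tmul, map2R_tmul]
  exact dmul2 (B := B) (A.Sinv y) x

lemma map2R_mulF (T : H →ₗ[k] H) (u v : H ⊗[k] H) :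
    map2R B T u * v
      = LinearMap.mul' k (H ⊗[k] H)
          ((TensorProduct.map (Δm ∘ₗ T) (LinearMap.mulRight k v ∘ₗ Δm))
            ((TensorProduct.comm k H H) u)) := by
  induction u using TensorProduct.induction_on with
  | zero => simp
  | tmul x y =>
      rw [map2R_tmul, TensorProduct.comm_tmul, TensorProduct.map_tmul]
      simp only [LinearMap.coe_comp, Function.comp_apply, LinearMap.mulRight_apply,
        LinearMap.mul'_apply, mul_assoc]
  | add u u' hu hu' => rw [map_add, add_mul, map_add, map_add, hu, hu', ← map_add]

lemma EVLR (T : H →ₗ[k] H) (v u : H ⊗[k] H) :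
    trimapR Δm T ((TensorProduct.map Δm LinearMap.id u) * (v ⊗ₜ[k] (1 : H)))
      = LinearMap.mul' k (H ⊗[k] H)
          ((TensorProduct.map (Δm ∘ₗ T) (LinearMap.mulRight k v ∘ₗ Δm))
            ((TensorProduct.comm k H H) u)) := by
  induction u using TensorProduct.induction_on with
  | zero => simp
  | tmul x y =>
      rw [TensorProduct.map_tmul, LinearMap.id_coe, id_eq,
        Algebra.TensorProduct.tmul_mul_tmul (Δm x) v y 1, mul_one, TensorProduct.comm_tmul,
        TensorProduct.map_tmul]
      have e : trimapR Δm T ((Δm x * v) ⊗ₜ[k] y) = Δm (T y) * (Δm x * v) := by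
        induction (Δm x * v) using TensorProduct.induction_on with
        | zero => rw [TensorProduct.zero_tmul, map_zero, mul_zero]
        | tmul p q => rw [trimapR_tmul]
        | add w w' hw hw' => rw [TensorProduct.add_tmul, map_add, hw, hw', mul_add]
      rw [e]
      simp only [LinearMap.coe_comp, Function.comp_apply, LinearMap.mulRight_apply,
        LinearMap.mul'_apply]
  | add u u' hu hu' =>
      rw [map_add, add_mul, map_add, map_add, map_add, hu, hu', ← map_add]

lemma PhiPR_iR3 {u : (H ⊗[k] H) ⊗[k] H} (hu : u ∈ J3) : trimapR Δm A.Sinv u ∈ J := by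
  refine map_iR3_le (B := B) (trimapR Δm A.Sinv) J (fun r g g' g'' => ?_)
    (fun r g g' g'' => ?_) u hu
  · rw [map_sub, trimapR_tmul, trimapR_tmul, ← mul_sub]
    exact Δ_mul_iR (B := B) (A.Sinv g'') (gen_mem (B := B) r g g')
  · rw [map_sub, trimapR_tmul, trimapR_tmul, Si_antimul A, A.Sinvα]
    have e : g ⊗ₜ[k] (βm r * g') = ((1 : H) ⊗ₜ[k] βm r) * (g ⊗ₜ[k] g') := by
      rw [Algebra.TensorProduct.tmul_mul_tmul, one_mul]
    rw [e]
    have h1 := iR_mul_right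
      (Submodule.neg_mem _ (dmul_chain (B := B) (Δ_beta (B := B) r) (A.Sinv g'')))
      (g ⊗ₜ[k] g')
    convert h1 using 1
    noncomm_ring

lemma W1R (w : H ⊗[k] H) (x a b : H) :
    trimapR Δm A.Sinv ((TensorProduct.assoc k H H H).symm (x ⊗ₜ[k] (w * (a ⊗ₜ[k] b))))
      - Δm (A.Sinv b)
          * trimapR Δm A.Sinv ((TensorProduct.assoc k H H H).symm (x ⊗ₜ[k] w))
          * ((1 : H) ⊗ₜ[k] a) ∈ J := by
  induction w using TensorProduct.induction_on with
  | zero =>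
      rw [zero_mul, TensorProduct.tmul_zero, LinearEquiv.map_zero, map_zero, mul_zero,
        zero_mul, sub_zero]
      exact Submodule.zero_mem _
  | tmul p q =>
      rw [Algebra.TensorProduct.tmul_mul_tmul, TensorProduct.assoc_symm_tmul,
        TensorProduct.assoc_symm_tmul, trimapR_tmul, trimapR_tmul, Si_antimul A]
      have e : x ⊗ₜ[k] (p * a) = (x ⊗ₜ[k] p) * ((1 : H) ⊗ₜ[k] a) := by
        rw [Algebra.TensorProduct.tmul_mul_tmul, mul_one]
      rw [e]
      have h1 := iR_mul_right (dmul2 (B := B) (A.Sinv b) (A.Sinv q))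
        ((x ⊗ₜ[k] p) * ((1 : H) ⊗ₜ[k] a))
      convert h1 using 1
      noncomm_ring
  | add w w' hw hw' =>
      rw [add_mul, TensorProduct.tmul_add, TensorProduct.tmul_add, LinearEquiv.map_add,
        LinearEquiv.map_add, map_add, map_add]
      have h2 := Submodule.add_mem _ hw hw'
      convert h2 using 1
      noncomm_ring

lemma EVRR (v u : H ⊗[k] H) :
    trimapR Δm A.Sinv
        ((TensorProduct.assoc k H H H).symm ((TensorProduct.map LinearMap.id Δm) u)
          * (TensorProduct.assoc k H H H).symm ((1 : H) ⊗ₜ[k] v))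
      - sandR Δm A.Sinv (map1R B A.Sinv u) v ∈ J := by
  refine cong_tmul
    (trimapR Δm A.Sinv
        ∘ₗ LinearMap.mulLeft k
            ((TensorProduct.assoc k H H H).symm ((TensorProduct.map LinearMap.id Δm) u))
        ∘ₗ (TensorProduct.assoc k H H H).symm.toLinearMap
        ∘ₗ TensorProduct.mk k H (H ⊗[k] H) 1)
    (sandR Δm A.Sinv (map1R B A.Sinv u)) J (fun a b => ?_) v
  simp only [LinearMap.coe_comp, Function.comp_apply, TensorProduct.mk_apply,
    LinearEquiv.coe_coe, LinearMap.mulLeft_apply, sandR_tmul]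
  induction u using TensorProduct.induction_on with
  | zero => simp
  | tmul x y =>
      rw [TensorProduct.map_tmul, LinearMap.id_coe, id_eq, ← assoc_symm_mul,
        Algebra.TensorProduct.tmul_mul_tmul x 1 (Δm y) (a ⊗ₜ[k] b), mul_one, map1R_tmul]
      exact W1R A (Δm y) x a b
  | add u u' hu hu' =>
      rw [map_add, LinearEquiv.map_add, add_mul, map_add, map_add]
      have h2 := Submodule.add_mem _ hu hu'
      convert h2 using 1
      noncomm_ring

lemma ELR : Δm (VofR A.Sinv C.F) * C.F - psiR B A.Sinv (VofR A.Sinv C.F) C.F ∈ J := by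
  have a1 : Δm (VofR A.Sinv C.F) * C.F - map2R B A.Sinv C.F * C.F ∈ J := by
    have h := iR_mul_right (dmulW A C.F) C.F
    convert h using 1
    noncomm_ring
  have a2 : map2R B A.Sinv C.F * C.F
      = trimapR Δm A.Sinv ((TensorProduct.map Δm LinearMap.id) C.F * (C.F ⊗ₜ[k] (1 : H))) := by
    rw [map2R_mulF, EVLR]
  have a3 : trimapR Δm A.Sinv ((TensorProduct.map Δm LinearMap.id) C.F * (C.F ⊗ₜ[k] (1 : H)))
      - trimapR Δm A.Sinv
          ((TensorProduct.assoc k H H H).symm ((TensorProduct.map LinearMap.id Δm) C.F)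
            * (TensorProduct.assoc k H H H).symm ((1 : H) ⊗ₜ[k] C.F)) ∈ J := by
    rw [← map_sub]
    exact PhiPR_iR3 A C.cocycle
  have a4 := EVRR A C.F C.F
  have a5 := sandR_C_cong A.Sinv (L1R A C.F) C.F
  have a6 : sandR Δm A.Sinv ((VofR A.Sinv C.F) ⊗ₜ[k] (1 : H)) C.F
      = psiR B A.Sinv (VofR A.Sinv C.F) C.F := sandR_one_c A.Sinv _ C.F
  have total := Submodule.add_mem _
    (Submodule.add_mem _ (Submodule.add_mem _ a1 a3) a4) a5
  convert total using 1
  rw [a2, a6]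
  abel

lemma LA2R : sandR Δm A.Sinv (Δm (VofR A.Sinv C.F) * C.F) C.Fbar
    - (VofR A.Sinv C.F) ⊗ₜ[k] (1 : H) ∈ J := by
  have b1 := sandR_C_cong A.Sinv (ELR A C) C.Fbar
  have b2 := RLR A (VofR A.Sinv C.F) C.F C.Fbar
  have b3 : psiR B A.Sinv (VofR A.Sinv C.F) (C.F * C.Fbar)
      - psiR B A.Sinv (VofR A.Sinv C.F) 1 ∈ J := by
    have h := psiR_iR (B := B) A (c := VofR A.Sinv C.F) C.inv_right
    rwa [map_sub] at h
  have b4 : psiR B A.Sinv (VofR A.Sinv C.F) 1 - (VofR A.Sinv C.F) ⊗ₜ[k] (1 : H) ∈ J := by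
    have e : psiR B A.Sinv (VofR A.Sinv C.F) 1
        = Δm (1 : H) * ((VofR A.Sinv C.F) ⊗ₜ[k] (1 : H)) := by
      rw [Algebra.TensorProduct.one_def, psiR_tmul, Si_one A]
    have h := iR_mul_right B.Δ_one ((VofR A.Sinv C.F) ⊗ₜ[k] (1 : H))
    rw [e]
    convert h using 1
    noncomm_ring
  have total := Submodule.add_mem _
    (Submodule.add_mem _ (Submodule.add_mem _ b1 b2) b3) b4
  convert total using 1
  abel


lemma sandR_one_Winv {Wb : H} (hW : VofR A.Sinv C.F * Wb = 1) (u : H ⊗[k] H) :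
    sandR Δm A.Sinv 1 u = psiR B A.Sinv (VofR A.Sinv C.F) u * (Wb ⊗ₜ[k] (1 : H)) := by
  induction u using TensorProduct.induction_on with
  | zero => simp
  | tmul x y =>
      rw [sandR_tmul, psiR_tmul, mul_one, mul_assoc, Algebra.TensorProduct.tmul_mul_tmul,
        hW, mul_one]
  | add u u' hu hu' => rw [map_add, map_add, hu, hu', add_mul]

lemma LA1R (Vinv : H) (u m w : H ⊗[k] H) :
    sandR C.ΔF (SFmap A.Sinv (A.Sinv Vinv) (A.Sinv (Vof A.S C.F))) 1 (u * (m * w))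
      - C.Fbar * (Δm (A.Sinv Vinv)
          * sandR Δm A.Sinv
              (sandR Δm A.Sinv
                (sandR Δm A.Sinv (Δm (A.Sinv (Vof A.S C.F)) * C.F) u) m) w) ∈ C.iRF := by
  refine cong_tmul
    (sandR C.ΔF (SFmap A.Sinv (A.Sinv Vinv) (A.Sinv (Vof A.S C.F))) 1
        ∘ₗ LinearMap.mulLeft k u ∘ₗ LinearMap.mulLeft k m)
    (LinearMap.mulLeft k C.Fbar ∘ₗ LinearMap.mulLeft k (Δm (A.Sinv Vinv))
        ∘ₗ sandR Δm A.Sinv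
            (sandR Δm A.Sinv (sandR Δm A.Sinv (Δm (A.Sinv (Vof A.S C.F)) * C.F) u) m))
    C.iRF (fun e f => ?_) w
  simp only [LinearMap.coe_comp, Function.comp_apply, LinearMap.mulLeft_apply, sandR_tmul]
  refine cong_tmul
    (sandR C.ΔF (SFmap A.Sinv (A.Sinv Vinv) (A.Sinv (Vof A.S C.F))) 1
        ∘ₗ LinearMap.mulLeft k u ∘ₗ LinearMap.mulRight k (e ⊗ₜ[k] f))
    (LinearMap.mulLeft k C.Fbar ∘ₗ LinearMap.mulLeft k (Δm (A.Sinv Vinv))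
        ∘ₗ LinearMap.mulRight k ((1 : H) ⊗ₜ[k] e) ∘ₗ LinearMap.mulLeft k (Δm (A.Sinv f))
        ∘ₗ sandR Δm A.Sinv (sandR Δm A.Sinv (Δm (A.Sinv (Vof A.S C.F)) * C.F) u))
    C.iRF (fun c d => ?_) m
  simp only [LinearMap.coe_comp, Function.comp_apply, LinearMap.mulLeft_apply,
    LinearMap.mulRight_apply, sandR_tmul]
  refine cong_tmul
    (sandR C.ΔF (SFmap A.Sinv (A.Sinv Vinv) (A.Sinv (Vof A.S C.F))) 1
        ∘ₗ LinearMap.mulRight k ((c ⊗ₜ[k] d) * (e ⊗ₜ[k] f)))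
    (LinearMap.mulLeft k C.Fbar ∘ₗ LinearMap.mulLeft k (Δm (A.Sinv Vinv))
        ∘ₗ LinearMap.mulRight k ((1 : H) ⊗ₜ[k] e) ∘ₗ LinearMap.mulLeft k (Δm (A.Sinv f))
        ∘ₗ LinearMap.mulRight k ((1 : H) ⊗ₜ[k] c) ∘ₗ LinearMap.mulLeft k (Δm (A.Sinv d))
        ∘ₗ sandR Δm A.Sinv (Δm (A.Sinv (Vof A.S C.F)) * C.F))
    C.iRF (fun a b => ?_) u
  simp only [LinearMap.coe_comp, Function.comp_apply, LinearMap.mulLeft_apply,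
    LinearMap.mulRight_apply, sandR_tmul, Algebra.TensorProduct.tmul_mul_tmul, SFmap_apply,
    ΔF_apply, Si_antimul A, mul_one, mul_assoc]
  have h0 := dmul2 (B := B) (A.Sinv b) (A.Sinv (Vof A.S C.F))
  have h1 := dmul_chain (B := B) h0 (A.Sinv d)
  have h2 := dmul_chain (B := B) h1 (A.Sinv f)
  have h3 := dmul_chain (B := B) h2 (A.Sinv Vinv)
  have etm : (1 : H) ⊗ₜ[k] (a * (c * e))
      = ((1 : H) ⊗ₜ[k] a) * (((1 : H) ⊗ₜ[k] c) * ((1 : H) ⊗ₜ[k] e)) := by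
    simp [Algebra.TensorProduct.tmul_mul_tmul]
  rw [etm]
  have hmem := mem_iRF C (iR_mul_right h3
    (C.F * (((1 : H) ⊗ₜ[k] a) * (((1 : H) ⊗ₜ[k] c) * ((1 : H) ⊗ₜ[k] e)))))
  convert hmem using 1
  noncomm_ring

lemma rightAxiom {Vinv : H} (hV1 : Vof A.S C.F * Vinv = 1) (hV2 : Vinv * Vof A.S C.F = 1)
    (h : H) :
    sandR C.ΔF (SFmap A.Sinv (A.Sinv Vinv) (A.Sinv (Vof A.S C.F))) 1 (C.ΔF h)
      - (SFmap A.Sinv (A.Sinv Vinv) (A.Sinv (Vof A.S C.F)) h) ⊗ₜ[k] (1 : H) ∈ C.iRF := by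
  have hSiV : A.Sinv (Vof A.S C.F) = VofR A.Sinv C.F := Si_Vof A C.F
  have hW1 : VofR A.Sinv C.F * A.Sinv Vinv = 1 := by
    rw [← hSiV, ← Si_antimul A Vinv (Vof A.S C.F), hV2, Si_one A]
  have hW2 : A.Sinv Vinv * VofR A.Sinv C.F = 1 := by
    rw [← hSiV, ← Si_antimul A (Vof A.S C.F) Vinv, hV1, Si_one A]
  -- step 1 : expansion
  have s1 : sandR C.ΔF (SFmap A.Sinv (A.Sinv Vinv) (A.Sinv (Vof A.S C.F))) 1 (C.ΔF h)
      - C.Fbar * (Δm (A.Sinv Vinv)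
          * sandR Δm A.Sinv
              (sandR Δm A.Sinv
                (sandR Δm A.Sinv (Δm (A.Sinv (Vof A.S C.F)) * C.F) C.Fbar) (Δm h)) C.F)
        ∈ C.iRF := by
    have := LA1R A C Vinv C.Fbar (Δm h) C.F
    rwa [← ΔF_apply] at this
  have s2 : sandR Δm A.Sinv (Δm (A.Sinv (Vof A.S C.F)) * C.F) C.Fbar
      - (VofR A.Sinv C.F) ⊗ₜ[k] (1 : H) ∈ J := by
    rw [hSiV]
    exact LA2R A C
  have s3 : sandR Δm A.Sinv
        (sandR Δm A.Sinv (Δm (A.Sinv (Vof A.S C.F)) * C.F) C.Fbar) (Δm h)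
      - (A.Sinv h * VofR A.Sinv C.F) ⊗ₜ[k] (1 : H) ∈ J := by
    have c1 := sandR_C_cong A.Sinv s2 (Δm h)
    have c2 : sandR Δm A.Sinv ((VofR A.Sinv C.F) ⊗ₜ[k] (1 : H)) (Δm h)
        = sandR Δm A.Sinv 1 (Δm h) * ((VofR A.Sinv C.F) ⊗ₜ[k] (1 : H)) := by
      rw [sandR_one_c, psiR_def_apply]
    have c3 := iR_mul_right (A.right_axiom h) ((VofR A.Sinv C.F) ⊗ₜ[k] (1 : H))
    have etm : ((A.Sinv h) ⊗ₜ[k] (1 : H)) * ((VofR A.Sinv C.F) ⊗ₜ[k] (1 : H))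
        = (A.Sinv h * VofR A.Sinv C.F) ⊗ₜ[k] (1 : H) := by
      rw [Algebra.TensorProduct.tmul_mul_tmul, mul_one]
    have total := Submodule.add_mem _ c1 c3
    convert total using 1
    rw [c2, ← etm]
    noncomm_ring
  have c4 := sandR_C_cong A.Sinv s3 C.F
  have s5 : sandR Δm A.Sinv ((A.Sinv h * VofR A.Sinv C.F) ⊗ₜ[k] (1 : H)) C.F
      = sandR Δm A.Sinv 1 C.F * ((A.Sinv h * VofR A.Sinv C.F) ⊗ₜ[k] (1 : H)) := by
    rw [sandR_one_c, psiR_def_apply]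
  have s6 := sandR_one_Winv A C hW1 C.F
  have s8 : Δm (A.Sinv Vinv) * Δm (VofR A.Sinv C.F) - 1 ∈ J := by
    have d1 := dmul2 (B := B) (A.Sinv Vinv) (VofR A.Sinv C.F)
    rw [hW2] at d1
    have d2 := Submodule.sub_mem _ B.Δ_one d1
    convert d2 using 1
    abel
  have c12 : C.Fbar * (Δm (A.Sinv Vinv)
        * sandR Δm A.Sinv
            (sandR Δm A.Sinv
              (sandR Δm A.Sinv (Δm (A.Sinv (Vof A.S C.F)) * C.F) C.Fbar) (Δm h)) C.F)
      - C.Fbar * (Δm (A.Sinv Vinv) * (sandR Δm A.Sinv 1 C.F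
            * ((A.Sinv h * VofR A.Sinv C.F) ⊗ₜ[k] (1 : H)))) ∈ C.iRF := by
    have j := mem_iRF C (Δ_mul_iR (B := B) (A.Sinv Vinv) c4)
    convert j using 1
    rw [← s5]
    noncomm_ring
  have c24 : C.Fbar * (Δm (A.Sinv Vinv) * (sandR Δm A.Sinv 1 C.F
          * ((A.Sinv h * VofR A.Sinv C.F) ⊗ₜ[k] (1 : H))))
      - C.Fbar * (Δm (A.Sinv Vinv) * ((Δm (VofR A.Sinv C.F) * C.F)
          * (((A.Sinv Vinv) ⊗ₜ[k] (1 : H))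
              * ((A.Sinv h * VofR A.Sinv C.F) ⊗ₜ[k] (1 : H))))) ∈ C.iRF := by
    have j := mem_iRF C (Δ_mul_iR (B := B) (A.Sinv Vinv)
      (iR_mul_right (Submodule.neg_mem _ (ELR A C))
        (((A.Sinv Vinv) ⊗ₜ[k] (1 : H)) * ((A.Sinv h * VofR A.Sinv C.F) ⊗ₜ[k] (1 : H)))))
    convert j using 1
    rw [s6]
    noncomm_ring
  have c45 : C.Fbar * (Δm (A.Sinv Vinv) * ((Δm (VofR A.Sinv C.F) * C.F)
          * (((A.Sinv Vinv) ⊗ₜ[k] (1 : H))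
              * ((A.Sinv h * VofR A.Sinv C.F) ⊗ₜ[k] (1 : H)))))
      - C.Fbar * (C.F * (((A.Sinv Vinv) ⊗ₜ[k] (1 : H))
              * ((A.Sinv h * VofR A.Sinv C.F) ⊗ₜ[k] (1 : H)))) ∈ C.iRF := by
    have j := mem_iRF C (iR_mul_right s8
      (C.F * (((A.Sinv Vinv) ⊗ₜ[k] (1 : H))
        * ((A.Sinv h * VofR A.Sinv C.F) ⊗ₜ[k] (1 : H)))))
    convert j using 1
    noncomm_ring
  have c56 : C.Fbar * (C.F * (((A.Sinv Vinv) ⊗ₜ[k] (1 : H))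
          * ((A.Sinv h * VofR A.Sinv C.F) ⊗ₜ[k] (1 : H))))
      - (SFmap A.Sinv (A.Sinv Vinv) (A.Sinv (Vof A.S C.F)) h) ⊗ₜ[k] (1 : H) ∈ C.iRF := by
    have j := iRF_mul_right C C.inv_left
      (((A.Sinv Vinv) ⊗ₜ[k] (1 : H)) * ((A.Sinv h * VofR A.Sinv C.F) ⊗ₜ[k] (1 : H)))
    have etm : ((A.Sinv Vinv) ⊗ₜ[k] (1 : H)) * ((A.Sinv h * VofR A.Sinv C.F) ⊗ₜ[k] (1 : H))
        = (A.Sinv Vinv * (A.Sinv h * VofR A.Sinv C.F)) ⊗ₜ[k] (1 : H) := by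
      rw [Algebra.TensorProduct.tmul_mul_tmul, mul_one]
    convert j using 1
    rw [SFmap_apply, hSiV, ← etm]
    noncomm_ring
  have total := Submodule.add_mem _ (Submodule.add_mem _
    (Submodule.add_mem _ (Submodule.add_mem _ s1 c12) c24) c45) c56
  convert total using 1
  abel

end Heavy

end TwistProofAux

/-- Main theorem: `S_F : h ↦ V_F⁻¹(Sh)V_F` is an invertible antipode for the
twisted bialgebroid `H_F`, with inverse `S_F⁻¹ : h ↦ (S⁻¹V_F⁻¹)(S⁻¹h)(S⁻¹V_F)`. -/
theorem main_twisted_antipode (B : LeftBialgebroid k R H) (A : BSAntipode B)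
    (C : DXCocycle B) (Vinv : H)
    (hV1 : Vof A.S C.F * Vinv = 1) (hV2 : Vinv * Vof A.S C.F = 1) :
    -- S_F is an algebra antihomomorphism
    SFmap A.S Vinv (Vof A.S C.F) 1 = 1 ∧
    (∀ g h : H, SFmap A.S Vinv (Vof A.S C.F) (g * h)
        = SFmap A.S Vinv (Vof A.S C.F) h * SFmap A.S Vinv (Vof A.S C.F) g) ∧
    -- S_F is invertible with the stated inverse
    (∀ h : H, SFmap A.Sinv (A.Sinv Vinv) (A.Sinv (Vof A.S C.F))
        (SFmap A.S Vinv (Vof A.S C.F) h) = h) ∧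
    (∀ h : H, SFmap A.S Vinv (Vof A.S C.F)
        (SFmap A.Sinv (A.Sinv Vinv) (A.Sinv (Vof A.S C.F)) h) = h) ∧
    -- S_F ∘ β_F = α_F
    (∀ r : R, SFmap A.S Vinv (Vof A.S C.F) (C.betaF r) = C.alphaF r) ∧
    -- left antipode axiom for H_F
    (∀ h : H, sandL C.ΔF (SFmap A.S Vinv (Vof A.S C.F)) 1 (C.ΔF h)
        - (1 : H) ⊗ₜ[k] SFmap A.S Vinv (Vof A.S C.F) h ∈ C.iRF) ∧
    -- right antipode axiom for H_F (for the inverse antipode)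
    (∀ h : H, sandR C.ΔF (SFmap A.Sinv (A.Sinv Vinv) (A.Sinv (Vof A.S C.F))) 1 (C.ΔF h)
        - (SFmap A.Sinv (A.Sinv Vinv) (A.Sinv (Vof A.S C.F)) h) ⊗ₜ[k] (1 : H) ∈ C.iRF) := by
  classical
  have hanti : ∀ x y : H, A.S (x * y) = A.S y * A.S x := A.S_antimul
  have hV2' : Vinv * TwistProofAux.VofL A.S C.F = 1 := by
    rw [← TwistProofAux.Vof_eq]; exact hV2
  have eSiSi : A.Sinv Vinv * A.Sinv (Vof A.S C.F) = 1 := by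
    rw [← TwistProofAux.Si_antimul A (Vof A.S C.F) Vinv, hV1, TwistProofAux.Si_one A]
  refine ⟨?_, ?_, ?_, ?_, ?_, ?_, ?_⟩
  · -- S_F (1) = 1
    rw [TwistProofAux.SFmap_apply, A.S_one, one_mul, hV2]
  · -- antimultiplicativity
    intro g h
    simp only [TwistProofAux.SFmap_apply]
    rw [A.S_antimul]
    have e1 : Vinv * (A.S h * Vof A.S C.F) * (Vinv * (A.S g * Vof A.S C.F))
        = Vinv * (A.S h * ((Vof A.S C.F * Vinv) * (A.S g * Vof A.S C.F))) := by
      noncomm_ring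
    rw [e1, hV1, one_mul, ← mul_assoc (A.S h)]
  · -- S_F⁻¹ ∘ S_F = id
    intro h
    simp only [TwistProofAux.SFmap_apply]
    rw [TwistProofAux.Si_antimul A Vinv (A.S h * Vof A.S C.F),
      TwistProofAux.Si_antimul A (A.S h) (Vof A.S C.F), A.Sinv_S]
    have e1 : A.Sinv Vinv * (A.Sinv (Vof A.S C.F) * h * A.Sinv Vinv * A.Sinv (Vof A.S C.F))
        = (A.Sinv Vinv * A.Sinv (Vof A.S C.F)) * h
            * (A.Sinv Vinv * A.Sinv (Vof A.S C.F)) := by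
      noncomm_ring
    rw [e1, eSiSi, one_mul, mul_one]
  · -- S_F ∘ S_F⁻¹ = id
    intro h
    simp only [TwistProofAux.SFmap_apply]
    rw [A.S_antimul (A.Sinv Vinv) (A.Sinv h * A.Sinv (Vof A.S C.F)),
      A.S_antimul (A.Sinv h) (A.Sinv (Vof A.S C.F)), A.S_Sinv, A.S_Sinv, A.S_Sinv]
    have e1 : Vinv * (Vof A.S C.F * h * Vinv * Vof A.S C.F)
        = (Vinv * Vof A.S C.F) * h * (Vinv * Vof A.S C.F) := by
      noncomm_ring
    rw [e1, hV2, one_mul, mul_one]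
  · -- S_F ∘ β_F = α_F
    intro r
    have e := TwistProofAux.VofL_congr A (TwistProofAux.key5 C r)
    rw [TwistProofAux.VofL_mul_r1 A.S A.S_antimul C.F (C.betaF r),
      TwistProofAux.VofL_mul_l1 A.S C.F (C.alphaF r)] at e
    rw [TwistProofAux.SFmap_apply, TwistProofAux.Vof_eq, e, ← mul_assoc, hV2', one_mul]
  · -- twisted left antipode axiom
    intro h
    exact TwistProofAux.leftAxiom A C hV1 hV2 h
  · -- twisted right antipode axiom
    intro h
    exact TwistProofAux.rightAxiom A C hV1 hV2 h
end
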